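/- arXiv:1708.09141 — 2 statements merged into one kernel-verified Lean document; each statement's English description precedes it below -/
import Mathlib

section
/- Let G1 and G2 be disjoint Eulerian multigraphs with edges e1 = u1v1 ∈ E(G1) and e2 = u2v2 ∈ E(G2). Let G be the vertex-edge-identification: identify v1 with v2, delete e1 and e2, and add a new edge u1u2. Then c(G) = c(G1) + c(G2) − 1 and ν(G) = ν(G1) + ν(G2) − 1. -/
open scoped Classical

/-- A finite multigraph without loops: a vertex type, an edge type, and an
incidence map assigning to each edge an unordered pair of distinct vertices. -/
structure MGraph where
  V : Type
  E : Type
  finV : Finite V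
  finE : Finite E
  ends : E → Sym2 V
  noLoop : ∀ e, ¬ (ends e).IsDiag

namespace MGraph

variable (G : MGraph)

/-- Degree of a vertex counting only edges in the edge set `F`. -/
noncomputable def degOn (F : Set G.E) (v : G.V) : ℕ := {e | e ∈ F ∧ v ∈ G.ends e}.ncard

/-- Degree of a vertex. -/
noncomputable def deg (v : G.V) : ℕ := G.degOn Set.univ v

/-- Adjacency using only edges from `F`. -/
def AdjOn (F : Set G.E) (a b : G.V) : Prop := ∃ e ∈ F, G.ends e = s(a, b)

/-- Reachability using only edges from `F`. -/
def ReachOn (F : Set G.E) : G.V → G.V → Prop := Relation.ReflTransGen (G.AdjOn F)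

/-- Connectivity of a multigraph. -/
def Connected : Prop := Nonempty G.V ∧ ∀ a b : G.V, G.ReachOn Set.univ a b

/-- A set of edges forms a cycle: it is nonempty, every vertex has degree 0 or 2
in it, and any two of its endpoints are joined by a path inside it. -/
def IsCycle (C : Set G.E) : Prop :=
  C.Nonempty ∧ (∀ v, G.degOn C v = 0 ∨ G.degOn C v = 2) ∧
    ∀ e ∈ C, ∀ f ∈ C, ∀ a b : G.V, a ∈ G.ends e → b ∈ G.ends f → G.ReachOn C a b

/-- A cycle decomposition of the edge set `F`: a set of cycles inside `F` such
that every edge of `F` lies in exactly one of them. -/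
def IsCycleDecompOn (F : Set G.E) (D : Set (Set G.E)) : Prop :=
  (∀ C ∈ D, G.IsCycle C ∧ C ⊆ F) ∧ ∀ e ∈ F, ∃! C, C ∈ D ∧ e ∈ C

/-- A cycle decomposition of the graph. -/
def IsCycleDecomp (D : Set (Set G.E)) : Prop := G.IsCycleDecompOn Set.univ D

/-- Minimum number of cycles in a cycle decomposition of `F`. -/
noncomputable def cOn (F : Set G.E) : ℕ :=
  sInf {n | ∃ D, G.IsCycleDecompOn F D ∧ D.ncard = n}

/-- Maximum number of cycles in a cycle decomposition of `F`. -/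
noncomputable def nuOn (F : Set G.E) : ℕ :=
  sSup {n | ∃ D, G.IsCycleDecompOn F D ∧ D.ncard = n}

/-- Minimum cycle number. -/
noncomputable def c : ℕ := G.cOn Set.univ

/-- Maximum cycle number. -/
noncomputable def nu : ℕ := G.nuOn Set.univ

/-- A multigraph is Eulerian if it admits a closed walk traversing every edge
exactly once. -/
def IsEulerian : Prop :=
  ∃ (vs : List G.V) (es : List G.E),
    vs.length = es.length + 1 ∧
    (∀ (i : ℕ) (e : G.E) (a b : G.V), es[i]? = some e → vs[i]? = some a →
      vs[i + 1]? = some b → G.ends e = s(a, b)) ∧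
    vs.head? = vs.getLast? ∧ es.Nodup ∧ ∀ e : G.E, e ∈ es

/-- A cut-edge (bridge): its endpoints are disconnected after its removal. -/
def IsBridge (e : G.E) : Prop :=
  ∃ a b, G.ends e = s(a, b) ∧ ¬ G.ReachOn {e}ᶜ a b

/-- 2-edge-connectivity: connected and without cut-edges. -/
def TwoEdgeConnected : Prop := G.Connected ∧ ∀ e, ¬ G.IsBridge e

/-- Reachability avoiding a vertex. -/
def ReachAvoid (v : G.V) (a b : G.V) : Prop :=
  Relation.ReflTransGen (fun x y => x ≠ v ∧ y ≠ v ∧ G.AdjOn Set.univ x y) a b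

/-- A cut-vertex: two vertices in the same component get separated by its removal. -/
def IsCutVertex (v : G.V) : Prop :=
  ∃ a b, a ≠ v ∧ b ≠ v ∧ G.ReachOn Set.univ a b ∧ ¬ G.ReachAvoid v a b

/-- Biconnected: connected, at least two vertices, and without cut-vertices. -/
def Biconnected : Prop :=
  G.Connected ∧ 2 ≤ Nat.card G.V ∧ ∀ v, ¬ G.IsCutVertex v

/-- The vertices covered by a set of edges. -/
def VertexSetOf (C : Set G.E) : Set G.V := {v | ∃ e ∈ C, v ∈ G.ends e}

/-- No two edge-disjoint cycles share more than two vertices. -/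
def NoTwoCyclesShareThree : Prop :=
  ∀ C1 C2 : Set G.E, G.IsCycle C1 → G.IsCycle C2 → Disjoint C1 C2 →
    (G.VertexSetOf C1 ∩ G.VertexSetOf C2).ncard ≤ 2

/-- An Eulerian multiedge: two vertices joined by an even positive number of
parallel edges. -/
def IsEulerianMultiedge : Prop :=
  Nat.card G.V = 2 ∧ 0 < Nat.card G.E ∧ Even (Nat.card G.E)

end MGraph

/-- Isomorphism of multigraphs. -/
structure MIso (G H : MGraph) where
  vEquiv : G.V ≃ H.V
  eEquiv : G.E ≃ H.E
  ends_eq : ∀ e, H.ends (eEquiv e) = (G.ends e).map vEquiv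

namespace MGraph

/-- Vertex-identification: glue `u1 ∈ V(G1)` with `u2 ∈ V(G2)`. -/
noncomputable def vertexIdent (G1 G2 : MGraph) (u1 : G1.V) (u2 : G2.V) : MGraph where
  V := G1.V ⊕ {v : G2.V // v ≠ u2}
  E := G1.E ⊕ G2.E
  finV := by have := G1.finV; have := G2.finV; infer_instance
  finE := by have := G1.finE; have := G2.finE; infer_instance
  ends := fun e =>
    match e with
    | Sum.inl e => (G1.ends e).map Sum.inl
    | Sum.inr e => (G2.ends e).map
        (fun v => if h : v = u2 then Sum.inl u1 else Sum.inr ⟨v, h⟩)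
  noLoop := by
    rintro (e | e) h
    · exact G1.noLoop e ((Sym2.isDiag_map Sum.inl_injective).mp h)
    · refine G2.noLoop e ((Sym2.isDiag_map ?_).mp h)
      intro a b hab
      by_cases ha : a = u2 <;> by_cases hb : b = u2 <;>
        simp [ha, hb] at hab ⊢ <;> simp_all

/-- Edge-identification: delete `e1` and `e2` (with endpoints `u1, v1` resp.
`u2, v2`) and add the new edges `u1u2` and `v1v2`. -/
def edgeIdent (G1 G2 : MGraph) (e1 : G1.E) (e2 : G2.E)
    (u1 v1 : G1.V) (u2 v2 : G2.V) : MGraph where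
  V := G1.V ⊕ G2.V
  E := {e : G1.E // e ≠ e1} ⊕ {e : G2.E // e ≠ e2} ⊕ Bool
  finV := by have := G1.finV; have := G2.finV; infer_instance
  finE := by have := G1.finE; have := G2.finE; infer_instance
  ends := fun e =>
    match e with
    | Sum.inl e => (G1.ends e.1).map Sum.inl
    | Sum.inr (Sum.inl e) => (G2.ends e.1).map Sum.inr
    | Sum.inr (Sum.inr true) => s(Sum.inl u1, Sum.inr u2)
    | Sum.inr (Sum.inr false) => s(Sum.inl v1, Sum.inr v2)
  noLoop := by
    rintro (e | e | b) h
    · exact G1.noLoop e.1 ((Sym2.isDiag_map Sum.inl_injective).mp h)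
    · exact G2.noLoop e.1 ((Sym2.isDiag_map Sum.inr_injective).mp h)
    · cases b <;> simp [Sym2.mk_isDiag_iff] at h

/-- Vertex-edge-identification: identify `v1` with `v2`, delete `e1 = u1v1`
and `e2 = u2v2`, and add a new edge `u1u2`. -/
noncomputable def vertexEdgeIdent (G1 G2 : MGraph) (e1 : G1.E) (e2 : G2.E)
    (u1 v1 : G1.V) (u2 v2 : G2.V) (h2 : G2.ends e2 = s(u2, v2)) : MGraph where
  V := G1.V ⊕ {w : G2.V // w ≠ v2}
  E := {e : G1.E // e ≠ e1} ⊕ {e : G2.E // e ≠ e2} ⊕ Unit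
  finV := by have := G1.finV; have := G2.finV; infer_instance
  finE := by have := G1.finE; have := G2.finE; infer_instance
  ends := fun e =>
    match e with
    | Sum.inl e => (G1.ends e.1).map Sum.inl
    | Sum.inr (Sum.inl e) => (G2.ends e.1).map
        (fun w => if h : w = v2 then Sum.inl v1 else Sum.inr ⟨w, h⟩)
    | Sum.inr (Sum.inr _) =>
        s(Sum.inl u1, Sum.inr ⟨u2, fun h =>
          G2.noLoop e2 (by rw [h2, h]; exact Sym2.mk_isDiag_iff.mpr rfl)⟩)
  noLoop := by
    rintro (e | e | u) h
    · exact G1.noLoop e.1 ((Sym2.isDiag_map Sum.inl_injective).mp h)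
    · refine G2.noLoop e.1 ((Sym2.isDiag_map ?_).mp h)
      intro a b hab
      by_cases ha : a = v2 <;> by_cases hb : b = v2 <;>
        simp [ha, hb] at hab ⊢ <;> simp_all
    · simp [Sym2.mk_isDiag_iff] at h

/-- Delete an edge from a multigraph. -/
def deleteEdge (G : MGraph) (e : G.E) : MGraph where
  V := G.V
  E := {f : G.E // f ≠ e}
  finV := G.finV
  finE := by have := G.finE; infer_instance
  ends := fun f => G.ends f.1
  noLoop := fun f => G.noLoop f.1

/-- `Sym2.pmap`-style map into a subtype. -/
noncomputable def sym2Pmap {α β : Type} {p : α → Prop} (f : ∀ a, p a → β)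
    (s : Sym2 α) (h : ∀ a ∈ s, p a) : Sym2 β :=
  let z := Classical.choose (Quot.exists_rep s)
  s(f z.1 (h z.1 (by
      have hz : Quot.mk _ z = s := Classical.choose_spec (Quot.exists_rep s)
      rw [← hz]; exact Sym2.mem_mk_left z.1 z.2)),
    f z.2 (h z.2 (by
      have hz : Quot.mk _ z = s := Classical.choose_spec (Quot.exists_rep s)
      rw [← hz]; exact Sym2.mem_mk_right z.1 z.2)))

/-- Delete a vertex (and all incident edges) from a multigraph. -/
noncomputable def deleteVertex (G : MGraph) (v : G.V) : MGraph where
  V := {w : G.V // w ≠ v}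
  E := {e : G.E // v ∉ G.ends e}
  finV := by have := G.finV; infer_instance
  finE := by have := G.finE; infer_instance
  ends := fun e => sym2Pmap (fun a ha => (⟨a, ha⟩ : {w : G.V // w ≠ v}))
    (G.ends e.1) (fun a ha hav => e.2 (hav ▸ ha))
  noLoop := by
    rintro ⟨e, he⟩ h
    apply G.noLoop e
    unfold sym2Pmap at h
    have hz : Quot.mk _ (Classical.choose (Quot.exists_rep (G.ends e))) = G.ends e :=
      Classical.choose_spec (Quot.exists_rep (G.ends e))
    rw [Sym2.mk_isDiag_iff] at h
    have : (Classical.choose (Quot.exists_rep (G.ends e))).1 =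
        (Classical.choose (Quot.exists_rep (G.ends e))).2 := congrArg Subtype.val h
    rw [← hz]
    exact Sym2.mk_isDiag_iff.mpr this

end MGraph

/-- A tree decomposition of a multigraph: a tree of bags covering all vertices
and edges such that the bags containing a given vertex form a subtree. -/
structure TreeDecomp (G : MGraph) where
  ι : Type
  t : SimpleGraph ι
  isTree : t.IsTree
  bag : ι → Set G.V
  covers_vertex : ∀ v : G.V, ∃ i, v ∈ bag i
  covers_edge : ∀ e : G.E, ∃ i, ∀ v ∈ G.ends e, v ∈ bag i
  bags_connected : ∀ v : G.V, (SimpleGraph.induce {i | v ∈ bag i} t).Connected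

namespace MGraph

/-- The graph has treewidth at most `k`. -/
def twLE (G : MGraph) (k : ℕ) : Prop :=
  ∃ T : TreeDecomp G, ∀ i, (T.bag i).ncard ≤ k + 1

/-- Treewidth of a multigraph. -/
noncomputable def treewidth (G : MGraph) : ℕ := sInf {k | G.twLE k}

/-- The closed necklace on `n ≥ 2` vertices: a cycle of length `n` with all
of its edges doubled. -/
def necklace (n : ℕ) (hn : 2 ≤ n) : MGraph where
  V := ZMod n
  E := ZMod n × Bool
  finV := by have : NeZero n := ⟨by omega⟩; infer_instance
  finE := by have : NeZero n := ⟨by omega⟩; infer_instance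
  ends := fun e => s(e.1, e.1 + 1)
  noLoop := by
    have : Fact (1 < n) := ⟨hn⟩
    intro e h
    rw [Sym2.mk_isDiag_iff] at h
    exact one_ne_zero (left_eq_add.mp h)

end MGraph

/- ====================  AUXILIARY DEVELOPMENT  ==================== -/

namespace MGraph

instance (G : MGraph) : Finite G.V := G.finV
instance (G : MGraph) : Finite G.E := G.finE

variable {G : MGraph}

lemma ends_pair (e : G.E) : ∃ a b, a ≠ b ∧ G.ends e = s(a, b) := by
  obtain ⟨⟨a, b⟩, hab⟩ := Quot.exists_rep (G.ends e)
  refine ⟨a, b, ?_, hab.symm⟩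
  intro h
  exact G.noLoop e (by rw [← hab, h]; exact Sym2.mk_isDiag_iff.mpr rfl)

lemma degOn_pos {F : Set G.E} {e : G.E} {v : G.V} (he : e ∈ F) (hv : v ∈ G.ends e) :
    0 < G.degOn F v := by
  rw [degOn, Set.ncard_pos (Set.toFinite _)]
  exact ⟨e, he, hv⟩

lemma degOn_empty (v : G.V) : G.degOn ∅ v = 0 := by
  simp [degOn]

lemma degOn_eq_zero {F : Set G.E} {v : G.V} (h : ∀ e ∈ F, v ∉ G.ends e) :
    G.degOn F v = 0 := by
  rw [degOn]
  convert Set.ncard_empty G.E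
  ext e; simp only [Set.mem_setOf_eq, Set.mem_empty_iff_false, iff_false]
  rintro ⟨he, hv⟩; exact h e he hv

lemma not_mem_of_degOn_zero {F : Set G.E} {v : G.V} (h : G.degOn F v = 0)
    {e : G.E} (he : e ∈ F) : v ∉ G.ends e := by
  intro hv
  have := degOn_pos he hv
  omega

lemma degOn_congr {F F' : Set G.E} (h : F = F') (v : G.V) :
    G.degOn F v = G.degOn F' v := by rw [h]

lemma degOn_union {F1 F2 : Set G.E} (h : Disjoint F1 F2) (v : G.V) :
    G.degOn (F1 ∪ F2) v = G.degOn F1 v + G.degOn F2 v := by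
  unfold degOn
  rw [show {e | e ∈ F1 ∪ F2 ∧ v ∈ G.ends e}
      = {e | e ∈ F1 ∧ v ∈ G.ends e} ∪ {e | e ∈ F2 ∧ v ∈ G.ends e} by
    ext x; simp only [Set.mem_union, Set.mem_setOf_eq]; tauto]
  refine Set.ncard_union_eq ?_ (Set.toFinite _) (Set.toFinite _)
  rw [Set.disjoint_left]
  rintro x ⟨hx1, -⟩ ⟨hx2, -⟩
  exact Set.disjoint_left.mp h hx1 hx2

lemma degOn_diff_singleton_mem {F : Set G.E} {e0 : G.E} {v : G.V}
    (he : e0 ∈ F) (hv : v ∈ G.ends e0) :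
    G.degOn (F \ {e0}) v + 1 = G.degOn F v := by
  unfold degOn
  rw [show {e | e ∈ F \ {e0} ∧ v ∈ G.ends e} = {e | e ∈ F ∧ v ∈ G.ends e} \ {e0} by
    ext x; simp only [Set.mem_diff, Set.mem_setOf_eq, Set.mem_singleton_iff]; tauto]
  exact Set.ncard_diff_singleton_add_one ⟨he, hv⟩ (Set.toFinite _)

lemma degOn_diff_singleton_not_mem {F : Set G.E} {e0 : G.E} {v : G.V}
    (hv : v ∉ G.ends e0) :
    G.degOn (F \ {e0}) v = G.degOn F v := by
  unfold degOn
  congr 1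
  ext x
  simp only [Set.mem_diff, Set.mem_setOf_eq, Set.mem_singleton_iff]
  constructor
  · rintro ⟨⟨hx, -⟩, h⟩; exact ⟨hx, h⟩
  · rintro ⟨hx, h⟩; exact ⟨⟨hx, fun hx0 => hv (hx0 ▸ h)⟩, h⟩

lemma degOn_insert {F : Set G.E} {e0 : G.E} (h : e0 ∉ F) (v : G.V) :
    G.degOn (insert e0 F) v = G.degOn F v + (if v ∈ G.ends e0 then 1 else 0) := by
  rw [show insert e0 F = {e0} ∪ F by simp, degOn_union (by simpa using h)]
  split_ifs with hv
  · rw [show G.degOn {e0} v = 1 by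
      unfold degOn
      rw [show {e | e ∈ ({e0} : Set G.E) ∧ v ∈ G.ends e} = {e0} by
        ext x; simp only [Set.mem_singleton_iff, Set.mem_setOf_eq]
        constructor; · rintro ⟨h, -⟩; exact h
        · rintro rfl; exact ⟨rfl, hv⟩]
      exact Set.ncard_singleton e0]
    omega
  · rw [degOn_eq_zero (by rintro e rfl; exact hv)]
    omega

lemma AdjOn.symm {F : Set G.E} {a b : G.V} (h : G.AdjOn F a b) : G.AdjOn F b a := by
  obtain ⟨e, he, hab⟩ := h
  exact ⟨e, he, hab.trans (Sym2.eq_swap)⟩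

lemma ReachOn.symm {F : Set G.E} {a b : G.V} (h : G.ReachOn F a b) : G.ReachOn F b a :=
  (@Relation.ReflTransGen.stdSymm _ _ ⟨fun _ _ hc => hc.symm⟩).symm _ _ h

lemma ReachOn.mono {F F' : Set G.E} (h : F ⊆ F') {a b : G.V} (hr : G.ReachOn F a b) :
    G.ReachOn F' a b :=
  Relation.ReflTransGen.mono (p := G.AdjOn F') (fun _ _ ⟨e, he, hab⟩ => ⟨e, h he, hab⟩) _ _ hr

lemma reach_closed {F : Set G.E} {K : Set G.V}
    (hK : ∀ a ∈ K, ∀ b, G.AdjOn F a b → b ∈ K) {x y : G.V}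
    (h : G.ReachOn F x y) (hx : x ∈ K) : y ∈ K := by
  induction h with
  | refl => exact hx
  | tail _ hadj ih => exact hK _ ih _ hadj

lemma ncard_eq_filter {α : Type} [Fintype α] (p : α → Prop) :
    {x | p x}.ncard = (Finset.univ.filter p).card := by
  classical
  rw [Set.ncard_eq_toFinset_card', Set.toFinset_setOf]

lemma even_sum_degOn [Fintype G.V] [Fintype G.E] (F : Set G.E) (K : Set G.V)
    (hK : ∀ a ∈ K, ∀ b, G.AdjOn F a b → b ∈ K) :
    Even (∑ v : G.V, if v ∈ K then G.degOn F v else 0) := by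
  classical
  have hrw : ∀ v : G.V, (if v ∈ K then G.degOn F v else 0)
      = ∑ e : G.E, if (e ∈ F ∧ v ∈ G.ends e) ∧ v ∈ K then 1 else 0 := by
    intro v
    by_cases hv : v ∈ K
    · simp only [hv, if_true, and_true]
      rw [degOn, ncard_eq_filter, Finset.card_filter]
      refine Finset.sum_congr rfl fun x _ => ?_
      split_ifs <;> rfl
    · simp [hv]
  rw [Finset.sum_congr rfl (fun v _ => hrw v), Finset.sum_comm]
  refine Finset.even_sum _ (fun e _ => ?_)
  by_cases he : e ∈ F
  · obtain ⟨a, b, hab, hends⟩ := ends_pair e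
    by_cases ha : a ∈ K
    · have hb : b ∈ K := hK a ha b ⟨e, he, hends⟩
      have : (∑ v : G.V, if (e ∈ F ∧ v ∈ G.ends e) ∧ v ∈ K then 1 else 0)
          = (Finset.univ.filter (fun v => (e ∈ F ∧ v ∈ G.ends e) ∧ v ∈ K)).card := by
        rw [Finset.card_filter]
      rw [this, show (Finset.univ.filter (fun v => (e ∈ F ∧ v ∈ G.ends e) ∧ v ∈ K))
          = {a, b} by
        ext v
        simp only [Finset.mem_filter, Finset.mem_univ, true_and, Finset.mem_insert,
          Finset.mem_singleton, hends, Sym2.mem_iff]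
        constructor
        · rintro ⟨⟨-, hv⟩, -⟩; exact hv
        · rintro (rfl | rfl)
          · exact ⟨⟨he, Or.inl rfl⟩, ha⟩
          · exact ⟨⟨he, Or.inr rfl⟩, hb⟩]
      rw [Finset.card_pair hab]
      exact even_two
    · have hb : b ∉ K := fun hb => ha (hK b hb a ⟨e, he, hends.trans Sym2.eq_swap⟩)
      rw [show (∑ v : G.V, if (e ∈ F ∧ v ∈ G.ends e) ∧ v ∈ K then 1 else 0) = 0 from
        Finset.sum_eq_zero (fun v _ => by
          rw [if_neg]
          rintro ⟨⟨-, hv⟩, hvK⟩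
          rw [hends, Sym2.mem_iff] at hv
          rcases hv with rfl | rfl
          exacts [ha hvK, hb hvK])]
      exact Even.zero
  · rw [show (∑ v : G.V, if (e ∈ F ∧ v ∈ G.ends e) ∧ v ∈ K then 1 else 0) = 0 from
      Finset.sum_eq_zero (fun v _ => by rw [if_neg]; rintro ⟨⟨h, -⟩, -⟩; exact he h)]
    exact Even.zero

lemma parity_aux (F : Set G.E) (K : Set G.V)
    (hK : ∀ a ∈ K, ∀ b, G.AdjOn F a b → b ∈ K) (x : G.V) (hx : x ∈ K)
    (hodd : Odd (G.degOn F x)) : ∃ y ∈ K, y ≠ x ∧ Odd (G.degOn F y) := by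
  letI := Fintype.ofFinite G.V
  letI := Fintype.ofFinite G.E
  by_contra hcon
  push_neg at hcon
  have heven := even_sum_degOn F K hK
  rw [← Finset.add_sum_erase _ _ (Finset.mem_univ x)] at heven
  have h2 : Even (∑ v ∈ Finset.univ.erase x, if v ∈ K then G.degOn F v else 0) := by
    refine Finset.even_sum _ (fun v hv => ?_)
    by_cases hvK : v ∈ K
    · rw [if_pos hvK]
      rcases Nat.even_or_odd (G.degOn F v) with h | h
      · exact h
      · exact absurd h (by
          have := hcon v hvK
          intro ho
          exact (Finset.ne_of_mem_erase hv) (by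
            by_contra hne
            exact (this hne) ho))
    · simp [hvK]
  rw [if_pos hx] at heven
  obtain ⟨k, hk⟩ := hodd
  obtain ⟨m, hm⟩ := h2
  obtain ⟨l, hl⟩ := heven
  omega

lemma parity_reach (F : Set G.E) (x y : G.V) (hodd : Odd (G.degOn F x))
    (hy : ∀ z, Odd (G.degOn F z) → z = x ∨ z = y) : G.ReachOn F x y := by
  have hK : ∀ a ∈ {z | G.ReachOn F x z}, ∀ b, G.AdjOn F a b → b ∈ {z | G.ReachOn F x z} :=
    fun a ha b hab => Relation.ReflTransGen.tail ha hab
  obtain ⟨z, hzK, hzx, hzodd⟩ := parity_aux F _ hK x (Relation.ReflTransGen.refl) hodd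
  rcases hy z hzodd with rfl | rfl
  · exact absurd rfl hzx
  · exact hzK

lemma parity_one (F : Set G.E) (x : G.V) (h : ∀ v, v ≠ x → Even (G.degOn F v)) :
    Even (G.degOn F x) := by
  rcases Nat.even_or_odd (G.degOn F x) with he | ho
  · exact he
  · obtain ⟨y, -, hyx, hyodd⟩ := parity_aux F Set.univ (fun _ _ _ _ => trivial) x trivial ho
    exact absurd (h y hyx) (Nat.not_even_iff_odd.mpr hyodd)

lemma parity_two (F : Set G.E) (x y : G.V) (hxy : x ≠ y)
    (h : ∀ v, v ≠ x → v ≠ y → Even (G.degOn F v)) (hox : Odd (G.degOn F x)) :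
    Odd (G.degOn F y) := by
  rcases Nat.even_or_odd (G.degOn F y) with he | ho
  · exfalso
    obtain ⟨z, -, hzx, hzodd⟩ := parity_aux F Set.univ (fun _ _ _ _ => trivial) x trivial hox
    by_cases hzy : z = y
    · exact Nat.not_even_iff_odd.mpr hzodd (hzy ▸ he)
    · exact Nat.not_even_iff_odd.mpr hzodd (h z hzx hzy)
  · exact ho

lemma IsCycle.deg_eq_two {C : Set G.E} (hC : G.IsCycle C) {e : G.E} {v : G.V}
    (he : e ∈ C) (hv : v ∈ G.ends e) : G.degOn C v = 2 := by
  rcases hC.2.1 v with h | h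
  · exact absurd (not_mem_of_degOn_zero h he hv) (by simp [hv])
  · exact h

lemma cycle_reach_minus {C : Set G.E} (hC : G.IsCycle C) {e : G.E} {a b : G.V}
    (he : e ∈ C) (hab : G.ends e = s(a, b)) : G.ReachOn (C \ {e}) a b := by
  have ha : a ∈ G.ends e := by rw [hab]; exact Sym2.mem_mk_left a b
  have hb : b ∈ G.ends e := by rw [hab]; exact Sym2.mem_mk_right a b
  have hda : G.degOn (C \ {e}) a + 1 = 2 := by
    rw [degOn_diff_singleton_mem he ha]; exact hC.deg_eq_two he ha
  refine parity_reach _ a b (by rw [show G.degOn (C \ {e}) a = 1 by omega]; exact odd_one) ?_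
  intro z hz
  by_cases hze : z ∈ G.ends e
  · rw [hab, Sym2.mem_iff] at hze; exact hze
  · exfalso
    rw [degOn_diff_singleton_not_mem hze] at hz
    rcases hC.2.1 z with h | h <;>
      (rw [h] at hz; rcases hz with ⟨k, hk⟩; omega)

end MGraph


namespace MGraph

variable {G : MGraph}

/-- Walks parameterized by vertex and edge lists. -/
inductive W (G : MGraph) (F : Set G.E) : List G.V → List G.E → Prop
  | single (v : G.V) : W G F [v] []
  | cons {a b : G.V} {vs : List G.V} {es : List G.E} {e : G.E}
      (he : e ∈ F) (hab : G.ends e = s(a, b)) (h : W G F (b :: vs) es) :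
      W G F (a :: b :: vs) (e :: es)

lemma W.edge_mem {F : Set G.E} {vs es} (h : W G F vs es) : ∀ e ∈ es, e ∈ F := by
  induction h with
  | single => simp
  | cons he hab h ih =>
    intro e' he'
    rcases List.mem_cons.mp he' with rfl | h'
    · exact he
    · exact ih e' h'

lemma W.ends_mem {F : Set G.E} {vs es} (h : W G F vs es) :
    ∀ e ∈ es, ∀ v ∈ G.ends e, v ∈ vs := by
  induction h with
  | single => simp
  | cons he hab h ih =>
    intro e' he' v hv
    rcases List.mem_cons.mp he' with rfl | h'
    · rw [hab, Sym2.mem_iff] at hv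
      rcases hv with rfl | rfl
      · exact List.mem_cons_self
      · exact List.mem_cons_of_mem _ (List.mem_cons_self)
    · exact List.mem_cons_of_mem _ (ih e' h' v hv)

lemma W.reach {F : Set G.E} {vs es} (h : W G F vs es) :
    ∀ a, vs.head? = some a → ∀ v ∈ vs, G.ReachOn {e | e ∈ es} a v := by
  induction h with
  | single w =>
    intro a ha v hv
    simp only [List.head?_cons, Option.some.injEq] at ha
    subst ha
    rcases List.mem_singleton.mp hv with rfl
    exact Relation.ReflTransGen.refl
  | @cons a' b vs es e he hab h ih =>
    intro a ha v hv
    simp only [List.head?_cons, Option.some.injEq] at ha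
    subst ha
    rcases List.mem_cons.mp hv with rfl | hv'
    · exact Relation.ReflTransGen.refl
    · have tail : G.ReachOn {e' | e' ∈ es} b v := ih b rfl v hv'
      have step : G.AdjOn {e' | e' ∈ e :: es} a' b := ⟨e, by simp, hab⟩
      exact Relation.ReflTransGen.head step
        (tail.mono (fun x hx => by simp only [Set.mem_setOf_eq] at hx ⊢; exact List.mem_cons_of_mem _ hx))

lemma W.suffix {F : Set G.E} {vs es} (h : W G F vs es) {v : G.V} (hv : v ∈ vs) :
    ∃ vs' es', W G F (v :: vs') es' ∧ (∀ x ∈ v :: vs', x ∈ vs) ∧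
      es'.length ≤ es.length ∧ (v :: vs').getLast? = vs.getLast? ∧
      (∀ e ∈ es', e ∈ es) := by
  induction h with
  | single w =>
    rcases List.mem_singleton.mp hv with rfl
    exact ⟨[], [], .single v, by simp, by simp, rfl, by simp⟩
  | @cons a b vs es e he hab h ih =>
    rcases List.mem_cons.mp hv with rfl | hv'
    · exact ⟨b :: vs, e :: es, .cons he hab h, fun x hx => hx, le_refl _, rfl, fun x hx => hx⟩
    · obtain ⟨vs', es', hw, hsub, hlen, hlast, hes⟩ := ih hv'
      exact ⟨vs', es', hw, fun x hx => List.mem_cons_of_mem _ (hsub x hx),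
        hlen.trans (Nat.le_succ _), hlast.trans (List.getLast?_cons_cons).symm,
        fun x hx => List.mem_cons_of_mem _ (hes x hx)⟩

lemma W.nodupify {F : Set G.E} :
    ∀ (n : ℕ) {vs : List G.V} {es : List G.E}, es.length ≤ n → W G F vs es →
    ∃ vs' es', W G F vs' es' ∧ vs'.Nodup ∧ vs'.head? = vs.head? ∧
      vs'.getLast? = vs.getLast? ∧ (∀ e ∈ es', e ∈ es) ∧ (∀ x ∈ vs', x ∈ vs) := by
  intro n
  induction n with
  | zero =>
    intro vs es hlen h
    cases h with
    | single v => exact ⟨[v], [], .single v, by simp, rfl, rfl, by simp, by simp⟩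
    | cons he hab h => simp at hlen
  | succ n ih =>
    intro vs es hlen h
    cases h with
    | single v => exact ⟨[v], [], .single v, by simp, rfl, rfl, by simp, by simp⟩
    | @cons a b vs₀ es₀ e he hab h =>
      by_cases hmem : a ∈ b :: vs₀
      · obtain ⟨vs', es', hw, hsub, hlen', hlast, hes⟩ := h.suffix hmem
        simp only [List.length_cons] at hlen
        obtain ⟨vs'', es'', hw'', hnd, hhead, hlast'', hesub, hvsub⟩ :=
          ih (hlen'.trans (by omega)) hw
        refine ⟨vs'', es'', hw'', hnd, ?_, ?_, ?_, ?_⟩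
        · rw [hhead]; rfl
        · rw [hlast'', hlast, List.getLast?_cons_cons]
        · exact fun x hx => List.mem_cons_of_mem _ (hes x (hesub x hx))
        · exact fun x hx => List.mem_cons_of_mem _ (hsub x (hvsub x hx))
      · simp only [List.length_cons] at hlen
        obtain ⟨vs'', es'', hw'', hnd, hhead, hlast'', hesub, hvsub⟩ :=
          ih (by omega) h
        cases vs'' with
        | nil => exact absurd hhead (by simp)
        | cons c t =>
          have hcb : c = b := by simpa using hhead
          subst hcb
          refine ⟨a :: c :: t, e :: es'', .cons he hab hw'', ?_, rfl, ?_, ?_, ?_⟩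
          · exact List.nodup_cons.mpr ⟨fun hx => hmem (hvsub _ hx), hnd⟩
          · rw [List.getLast?_cons_cons, hlast'']
            exact (List.getLast?_cons_cons).symm
          · intro x hx
            rcases List.mem_cons.mp hx with rfl | hx'
            · exact List.mem_cons_self
            · exact List.mem_cons_of_mem _ (hesub x hx')
          · intro x hx
            rcases List.mem_cons.mp hx with rfl | hx'
            · exact List.mem_cons_self
            · exact List.mem_cons_of_mem _ (hvsub x hx')

lemma W.edges_nodup {F : Set G.E} {vs es} (h : W G F vs es) (hnd : vs.Nodup) :
    es.Nodup := by
  induction h with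
  | single => exact List.nodup_nil
  | @cons a b vs₀ es₀ e he hab h ih =>
    rw [List.nodup_cons] at hnd
    refine List.nodup_cons.mpr ⟨fun hmem => ?_, ih hnd.2⟩
    have := h.ends_mem e hmem a (by rw [hab]; exact Sym2.mem_mk_left a b)
    exact hnd.1 this

lemma W.count_deg {F : Set G.E} {vs es} (v : G.V) (h : W G F vs es) : es.Nodup →
    2 * (vs.count v) = G.degOn {e | e ∈ es} v
      + (if vs.head? = some v then 1 else 0) + (if vs.getLast? = some v then 1 else 0) := by
  induction h with
  | single w =>
    intro _
    have hd : G.degOn {e | e ∈ ([] : List G.E)} v = 0 := by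
      rw [show {e | e ∈ ([] : List G.E)} = (∅ : Set G.E) by simp]; exact degOn_empty v
    rw [hd]
    simp only [List.count_singleton, List.head?_cons, List.getLast?_singleton,
      Option.some.injEq, beq_iff_eq]
    by_cases hw : w = v <;> simp [hw]
  | @cons a b vs₀ es₀ e he hab h ih =>
    intro hnd
    rw [List.nodup_cons] at hnd
    have ihv := ih hnd.2
    have hne : e ∉ {e' | e' ∈ es₀} := hnd.1
    have hdeg : G.degOn {e' | e' ∈ e :: es₀} v
        = G.degOn {e' | e' ∈ es₀} v + (if v ∈ G.ends e then 1 else 0) := by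
      rw [degOn_congr (show {e' | e' ∈ e :: es₀} = insert e {e' | e' ∈ es₀} by
        ext x; simp [List.mem_cons]), degOn_insert hne]
    have habne : a ≠ b := by
      intro hh
      exact G.noLoop e (by rw [hab, hh]; exact Sym2.mk_isDiag_iff.mpr rfl)
    have hEnds : (if v ∈ G.ends e then 1 else 0)
        = (if a = v then 1 else 0) + (if b = v then (1:ℕ) else 0) := by
      have hmem : (v ∈ G.ends e) ↔ (v = a ∨ v = b) := by rw [hab, Sym2.mem_iff]
      rcases eq_or_ne a v with rfl | hva
      · have hvb : ¬ (b = a) := fun hh => habne hh.symm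
        simp [hmem, hvb]
      · rcases eq_or_ne b v with rfl | hvb
        · simp [hmem, hva, Ne.symm hva]
        · simp [hmem, hva, hvb, Ne.symm hva, Ne.symm hvb]
    have hcnt : (a :: b :: vs₀).count v = (b :: vs₀).count v + (if a = v then 1 else 0) := by
      rw [List.count_cons]
      simp only [beq_iff_eq]
    rw [List.getLast?_cons_cons, hdeg, hcnt, hEnds]
    simp only [List.head?_cons, Option.some.injEq] at ihv ⊢
    split_ifs at ihv ⊢ <;> omega

lemma toW : ∀ (es : List G.E) (vs : List G.V), vs.length = es.length + 1 →
    (∀ (i : ℕ) (e : G.E) (a b : G.V), es[i]? = some e → vs[i]? = some a →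
      vs[i + 1]? = some b → G.ends e = s(a, b)) →
    W G Set.univ vs es := by
  intro es
  induction es with
  | nil =>
    intro vs hlen _
    match vs, hlen with
    | [v], _ => exact .single v
  | cons e es ih =>
    intro vs hlen hcond
    match vs, hlen with
    | a :: b :: vs', hlen =>
      refine W.cons trivial (hcond 0 e a b (by simp) (by simp) (by simp)) (ih (b :: vs') (by simpa using hlen) ?_)
      intro i e' x y hh1 hh2 hh3
      exact hcond (i + 1) e' x y (by simpa using hh1) (by simpa using hh2) (by simpa using hh3)

lemma IsEulerian.even_deg (h : G.IsEulerian) (v : G.V) : Even (G.degOn Set.univ v) := by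
  obtain ⟨vs, es, hlen, hcond, hclosed, hnd, hall⟩ := h
  have hw := toW es vs hlen hcond
  have hcount := hw.count_deg v hnd
  have hset : {e | e ∈ es} = (Set.univ : Set G.E) := by ext e; simp [hall e]
  rw [hset, hclosed] at hcount
  by_cases hv : vs.getLast? = some v
  · simp only [hv, if_true] at hcount
    exact ⟨vs.count v - 1, by omega⟩
  · simp only [hv, if_false] at hcount
    exact ⟨vs.count v, by omega⟩

lemma mem_of_head? {α : Type} {l : List α} {a : α} (h : l.head? = some a) : a ∈ l := by
  cases l with
  | nil => simp at h
  | cons x t =>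
    simp only [List.head?_cons, Option.some.injEq] at h
    exact h ▸ List.mem_cons_self

lemma mem_of_getLast? {α : Type} {l : List α} {a : α} (h : l.getLast? = some a) : a ∈ l := by
  induction l with
  | nil => simp at h
  | cons x t ih =>
    cases t with
    | nil =>
      simp only [List.getLast?_singleton, Option.some.injEq] at h
      exact h ▸ List.mem_cons_self
    | cons y s =>
      rw [List.getLast?_cons_cons] at h
      exact List.mem_cons_of_mem _ (ih h)

lemma cycle_of_path {F : Set G.E} {vs : List G.V} {es : List G.E} {a b : G.V} {e0 : G.E}
    (h : W G F vs es) (hnd : vs.Nodup) (ha : vs.head? = some a) (hb : vs.getLast? = some b)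
    (hab : a ≠ b) (he0 : e0 ∉ es) (hends : G.ends e0 = s(a, b)) :
    G.IsCycle (insert e0 {e | e ∈ es}) := by
  have hend := h.edges_nodup hnd
  have hamem : a ∈ vs := mem_of_head? ha
  have hbmem : b ∈ vs := mem_of_getLast? hb
  have hdeg : ∀ v, G.degOn (insert e0 {e | e ∈ es}) v = if v ∈ vs then 2 else 0 := by
    intro v
    have hcv := h.count_deg v hend
    rw [ha, hb] at hcv
    simp only [Option.some.injEq] at hcv
    have hne : e0 ∉ {e | e ∈ es} := he0
    rw [degOn_insert hne]
    have hvmem : (v ∈ G.ends e0) ↔ (v = a ∨ v = b) := by rw [hends, Sym2.mem_iff]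
    by_cases hv : v ∈ vs
    · rw [if_pos hv]
      have hc1 : vs.count v = 1 := List.count_eq_one_of_mem hnd hv
      rw [hc1, mul_one] at hcv
      rcases eq_or_ne a v with rfl | hva
      · have hvb : ¬ (b = a) := fun hh => hab hh.symm
        rw [if_pos rfl, if_neg hvb] at hcv
        rw [if_pos (hvmem.mpr (Or.inl rfl))]
        omega
      · rcases eq_or_ne b v with rfl | hvb
        · rw [if_neg hva, if_pos rfl] at hcv
          rw [if_pos (hvmem.mpr (Or.inr rfl))]
          omega
        · rw [if_neg hva, if_neg hvb] at hcv
          rw [if_neg (fun hh => by rcases hvmem.mp hh with rfl | rfl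
                                   exacts [hva rfl, hvb rfl])]
          omega
    · rw [if_neg hv]
      have hc0 : vs.count v = 0 := by
        rw [List.count_eq_zero]; exact hv
      rw [hc0, mul_zero] at hcv
      have hva : ¬ (a = v) := fun hh => hv (hh ▸ hamem)
      have hvb : ¬ (b = v) := fun hh => hv (hh ▸ hbmem)
      rw [if_neg hva, if_neg hvb] at hcv
      rw [if_neg (fun hh => by rcases hvmem.mp hh with rfl | rfl
                               exacts [hva rfl, hvb rfl])]
      omega
  refine ⟨⟨e0, Set.mem_insert _ _⟩, fun v => ?_, ?_⟩
  · rw [hdeg v]; by_cases hv : v ∈ vs <;> simp [hv]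
  · have hvs_reach : ∀ v ∈ vs, G.ReachOn (insert e0 {e | e ∈ es}) a v := by
      intro v hv
      exact (h.reach a ha v hv).mono (fun x hx => Set.mem_insert_of_mem _ hx)
    have hmem_vs : ∀ e ∈ insert e0 {e | e ∈ es}, ∀ v ∈ G.ends e, v ∈ vs := by
      intro e he v hv
      rcases Set.mem_insert_iff.mp he with rfl | he'
      · rw [hends, Sym2.mem_iff] at hv
        rcases hv with rfl | rfl
        exacts [hamem, hbmem]
      · exact h.ends_mem e he' v hv
    intro e he f hf x y hx hy
    exact (hvs_reach x (hmem_vs e he x hx)).symm.trans (hvs_reach y (hmem_vs f hf y hy))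

lemma reach_to_walk {F : Set G.E} {a b : G.V} (h : G.ReachOn F a b) :
    ∃ vs es, W G F vs es ∧ vs.head? = some a ∧ vs.getLast? = some b := by
  induction h using Relation.ReflTransGen.head_induction_on with
  | refl => exact ⟨[b], [], .single b, rfl, rfl⟩
  | head hadj _ ih =>
    obtain ⟨vs, es, hw, hh, hl⟩ := ih
    obtain ⟨e, he, hends'⟩ := hadj
    cases vs with
    | nil => exact absurd hh (by simp)
    | cons c t =>
      simp only [List.head?_cons, Option.some.injEq] at hh
      subst hh
      exact ⟨_ :: c :: t, e :: es, .cons he hends' hw, rfl, by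
        rw [List.getLast?_cons_cons]; exact hl⟩

lemma cycle_exists {F : Set G.E} (heven : ∀ v, Even (G.degOn F v)) {e0 : G.E}
    (he0 : e0 ∈ F) : ∃ C, G.IsCycle C ∧ C ⊆ F ∧ e0 ∈ C := by
  obtain ⟨a, b, hab, hends⟩ := ends_pair e0
  have ha : a ∈ G.ends e0 := by rw [hends]; exact Sym2.mem_mk_left a b
  have hda : G.degOn (F \ {e0}) a + 1 = G.degOn F a := degOn_diff_singleton_mem he0 ha
  have hodd : Odd (G.degOn (F \ {e0}) a) := by
    obtain ⟨k, hk⟩ := heven a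
    exact ⟨k - 1, by omega⟩
  have hreach : G.ReachOn (F \ {e0}) a b := by
    refine parity_reach _ a b hodd ?_
    intro z hz
    by_cases hze : z ∈ G.ends e0
    · rw [hends, Sym2.mem_iff] at hze; exact hze
    · exfalso
      rw [degOn_diff_singleton_not_mem hze] at hz
      obtain ⟨k, hk⟩ := heven z
      obtain ⟨m, hm⟩ := hz
      omega
  obtain ⟨vs, es, hw, hh, hl⟩ := reach_to_walk hreach
  obtain ⟨vs', es', hw', hnd, hh', hl', hesub, -⟩ := W.nodupify es.length (le_refl _) hw
  have he0es : e0 ∉ es' := by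
    intro hmem
    exact ((hw'.edge_mem e0 hmem).2 rfl)
  refine ⟨insert e0 {e | e ∈ es'}, cycle_of_path hw' hnd (hh'.trans hh) (hl'.trans hl)
    hab he0es hends, ?_, Set.mem_insert _ _⟩
  intro x hx
  rcases Set.mem_insert_iff.mp hx with rfl | hx'
  · exact he0
  · exact (hw'.edge_mem x hx').1

lemma decomp_exists : ∀ (n : ℕ) (F : Set G.E), F.ncard ≤ n →
    (∀ v, Even (G.degOn F v)) → ∃ D, G.IsCycleDecompOn F D := by
  intro n
  induction n with
  | zero =>
    intro F hle _
    have : F = ∅ := by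
      rw [← Set.ncard_eq_zero (Set.toFinite F)]; omega
    subst this
    exact ⟨∅, fun C hC => absurd hC (Set.notMem_empty C), fun e he => absurd he (Set.notMem_empty e)⟩
  | succ n ih =>
    intro F hle heven
    rcases Set.eq_empty_or_nonempty F with rfl | ⟨e0, he0⟩
    · exact ⟨∅, fun C hC => absurd hC (Set.notMem_empty C), fun e he => absurd he (Set.notMem_empty e)⟩
    · obtain ⟨C, hC, hCF, he0C⟩ := cycle_exists heven he0
      have heven' : ∀ v, Even (G.degOn (F \ C) v) := by
        intro v
        have hsplit : G.degOn F v = G.degOn (F \ C) v + G.degOn C v := by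
          rw [← degOn_union Set.disjoint_sdiff_left v, degOn_congr (Set.diff_union_of_subset hCF)]
        obtain ⟨k, hk⟩ := heven v
        rcases hC.2.1 v with hd | hd
        · rw [hd] at hsplit
          exact ⟨k, by omega⟩
        · rw [hd] at hsplit
          exact ⟨k - 1, by omega⟩
      have hlt : (F \ C).ncard < F.ncard := by
        refine Set.ncard_lt_ncard ?_ (Set.toFinite F)
        rw [Set.ssubset_iff_of_subset (Set.diff_subset)]
        exact ⟨e0, he0, fun hh => hh.2 he0C⟩
      obtain ⟨D', hD'⟩ := ih (F \ C) (by omega) heven'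
      refine ⟨insert C D', ?_, ?_⟩
      · intro X hX
        rcases Set.mem_insert_iff.mp hX with rfl | hX'
        · exact ⟨hC, hCF⟩
        · exact ⟨(hD'.1 X hX').1, ((hD'.1 X hX').2).trans Set.diff_subset⟩
      · intro e he
        by_cases heC : e ∈ C
        · refine ⟨C, ⟨Set.mem_insert _ _, heC⟩, ?_⟩
          rintro Y ⟨hY, heY⟩
          rcases Set.mem_insert_iff.mp hY with rfl | hY'
          · rfl
          · exact absurd ((hD'.1 Y hY').2 heY).2 (fun hh => hh heC)
        · obtain ⟨Y, ⟨hYD, heY⟩, huniq⟩ := hD'.2 e ⟨he, heC⟩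
          refine ⟨Y, ⟨Set.mem_insert_of_mem _ hYD, heY⟩, ?_⟩
          rintro Z ⟨hZ, heZ⟩
          rcases Set.mem_insert_iff.mp hZ with rfl | hZ'
          · exact absurd heZ heC
          · exact huniq Z ⟨hZ', heZ⟩

lemma IsEulerian.decomp (h : G.IsEulerian) : ∃ D, G.IsCycleDecomp D :=
  decomp_exists (Set.univ : Set G.E).ncard _ (le_refl _) h.even_deg

end MGraph


lemma ncard_bij' {α β : Type} {s : Set α} {t : Set β} (f : α → β)
    (h1 : ∀ a ∈ s, f a ∈ t) (h2 : ∀ a ∈ s, ∀ a' ∈ s, f a = f a' → a = a')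
    (h3 : ∀ b ∈ t, ∃ a ∈ s, f a = b) : s.ncard = t.ncard := by
  have ht : t = f '' s := by
    ext b
    constructor
    · intro hb
      obtain ⟨a, ha, rfl⟩ := h3 b hb
      exact ⟨a, ha, rfl⟩
    · rintro ⟨a, ha, rfl⟩
      exact h1 a ha
  rw [ht, Set.ncard_image_of_injOn h2]

namespace MGraph

lemma degOn_singleton {G : MGraph} (e0 : G.E) (v : G.V) :
    G.degOn {e0} v = if v ∈ G.ends e0 then 1 else 0 := by
  rw [show ({e0} : Set G.E) = insert e0 ∅ by simp, degOn_insert (Set.notMem_empty e0),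
    degOn_empty]
  omega

end MGraph

open MGraph in
/-- All the data of a vertex-edge-identification. -/
structure VSetup where
  G1 : MGraph
  G2 : MGraph
  e1 : G1.E
  e2 : G2.E
  u1 : G1.V
  v1 : G1.V
  u2 : G2.V
  v2 : G2.V
  h1 : G1.ends e1 = s(u1, v1)
  h2 : G2.ends e2 = s(u2, v2)

namespace VSetup

open MGraph

variable (S : VSetup)

/-- The identified graph. -/
noncomputable abbrev Gr : MGraph where
  V := S.G1.V ⊕ {w : S.G2.V // w ≠ S.v2}
  E := {e : S.G1.E // e ≠ S.e1} ⊕ {e : S.G2.E // e ≠ S.e2} ⊕ Unit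
  finV := (MGraph.vertexEdgeIdent S.G1 S.G2 S.e1 S.e2 S.u1 S.v1 S.u2 S.v2 S.h2).finV
  finE := (MGraph.vertexEdgeIdent S.G1 S.G2 S.e1 S.e2 S.u1 S.v1 S.u2 S.v2 S.h2).finE
  ends := (MGraph.vertexEdgeIdent S.G1 S.G2 S.e1 S.e2 S.u1 S.v1 S.u2 S.v2 S.h2).ends
  noLoop := (MGraph.vertexEdgeIdent S.G1 S.G2 S.e1 S.e2 S.u1 S.v1 S.u2 S.v2 S.h2).noLoop

lemma hu1v1 : S.u1 ≠ S.v1 := by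
  intro h
  exact S.G1.noLoop S.e1 (by rw [S.h1, h]; exact Sym2.mk_isDiag_iff.mpr rfl)

lemma hu2v2 : S.u2 ≠ S.v2 := by
  intro h
  exact S.G2.noLoop S.e2 (by rw [S.h2, h]; exact Sym2.mk_isDiag_iff.mpr rfl)

/-- The new edge. -/
noncomputable def eps : S.Gr.E := Sum.inr (Sum.inr ())

/-- The embedding of the vertices of `G2`. -/
noncomputable def ι2 (w : S.G2.V) : S.Gr.V :=
  if h : w = S.v2 then Sum.inl S.v1 else Sum.inr ⟨w, h⟩

lemma ι2_v2 : S.ι2 S.v2 = Sum.inl S.v1 := by simp [ι2]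

lemma ι2_ne {w : S.G2.V} (h : w ≠ S.v2) : S.ι2 w = Sum.inr ⟨w, h⟩ := by simp [ι2, h]

lemma ι2_inj : Function.Injective S.ι2 := by
  intro w w' h
  by_cases hw : w = S.v2 <;> by_cases hw' : w' = S.v2
  · exact hw.trans hw'.symm
  · subst hw
    rw [S.ι2_v2, S.ι2_ne hw'] at h
    exact absurd h Sum.inl_ne_inr
  · subst hw'
    rw [S.ι2_v2, S.ι2_ne hw] at h
    exact absurd h Sum.inr_ne_inl
  · rw [S.ι2_ne hw, S.ι2_ne hw'] at h
    exact congrArg Subtype.val (Sum.inr_injective h)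

lemma ends_inl (f : {e : S.G1.E // e ≠ S.e1}) :
    S.Gr.ends (Sum.inl f) = (S.G1.ends f.1).map Sum.inl := rfl

lemma ends_inr (f : {e : S.G2.E // e ≠ S.e2}) :
    S.Gr.ends (Sum.inr (Sum.inl f)) = (S.G2.ends f.1).map S.ι2 := rfl

lemma ends_eps : S.Gr.ends S.eps = s(Sum.inl S.u1, S.ι2 S.u2) := by
  rw [ι2_ne S S.hu2v2]
  rfl

lemma mem_map_inl {a : S.G1.V} {p : Sym2 S.G1.V} :
    (Sum.inl a : S.Gr.V) ∈ p.map Sum.inl ↔ a ∈ p := by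
  rw [Sym2.mem_map]
  constructor
  · rintro ⟨x, hx, hax⟩
    rw [show x = a from Sum.inl_injective hax] at hx
    exact hx
  · intro h
    exact ⟨a, h, rfl⟩

lemma inr_not_mem_map_inl {w : {w : S.G2.V // w ≠ S.v2}} {p : Sym2 S.G1.V} :
    (Sum.inr w : S.Gr.V) ∉ p.map Sum.inl := by
  rw [Sym2.mem_map]
  rintro ⟨x, -, hx⟩
  exact Sum.inl_ne_inr hx

lemma mem_map_ι2_inl {a : S.G1.V} {p : Sym2 S.G2.V} :
    (Sum.inl a : S.Gr.V) ∈ p.map S.ι2 ↔ (a = S.v1 ∧ S.v2 ∈ p) := by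
  rw [Sym2.mem_map]
  constructor
  · rintro ⟨x, hx, hax⟩
    by_cases hxv : x = S.v2
    · subst hxv
      rw [ι2_v2] at hax
      exact ⟨(Sum.inl_injective hax).symm, hx⟩
    · rw [ι2_ne S hxv] at hax
      exact absurd hax (Sum.inr_ne_inl)
  · rintro ⟨rfl, hv⟩
    exact ⟨S.v2, hv, ι2_v2 S⟩

lemma mem_map_ι2_inr {w : S.G2.V} {hw : w ≠ S.v2} {p : Sym2 S.G2.V} :
    (Sum.inr ⟨w, hw⟩ : S.Gr.V) ∈ p.map S.ι2 ↔ w ∈ p := by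
  rw [Sym2.mem_map]
  constructor
  · rintro ⟨x, hx, hax⟩
    by_cases hxv : x = S.v2
    · subst hxv
      rw [ι2_v2] at hax
      exact absurd hax (Sum.inl_ne_inr)
    · rw [ι2_ne S hxv] at hax
      obtain ⟨rfl⟩ : x = w := congrArg Subtype.val (Sum.inr_injective hax)
      exact hx
  · intro h
    exact ⟨w, h, ι2_ne S hw⟩

/-- The image of an edge set of `G1`. -/
def m1 (C : Set S.G1.E) : Set S.Gr.E := fun x =>
  match x with
  | Sum.inl e => e.1 ∈ C
  | _ => False

/-- The image of an edge set of `G2`. -/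
def m2 (C : Set S.G2.E) : Set S.Gr.E := fun x =>
  match x with
  | Sum.inr (Sum.inl e) => e.1 ∈ C
  | _ => False

/-- The part of an edge set of the identification that lives in `G1`. -/
def proj1 (C : Set S.Gr.E) : Set S.G1.E := {e | ∃ h : e ≠ S.e1, Sum.inl ⟨e, h⟩ ∈ C}

/-- The part of an edge set of the identification that lives in `G2`. -/
def proj2 (C : Set S.Gr.E) : Set S.G2.E := {e | ∃ h : e ≠ S.e2, Sum.inr (Sum.inl ⟨e, h⟩) ∈ C}

noncomputable def merge (C1 : Set S.G1.E) (C2 : Set S.G2.E) : Set S.Gr.E :=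
  insert S.eps (S.m1 C1 ∪ S.m2 C2)

def split1 (C : Set S.Gr.E) : Set S.G1.E := insert S.e1 (S.proj1 C)

def split2 (C : Set S.Gr.E) : Set S.G2.E := insert S.e2 (S.proj2 C)

lemma mem_m1 {C : Set S.G1.E} {f : {e : S.G1.E // e ≠ S.e1}} :
    (Sum.inl f : S.Gr.E) ∈ S.m1 C ↔ f.1 ∈ C := Iff.rfl

lemma mem_m2 {C : Set S.G2.E} {f : {e : S.G2.E // e ≠ S.e2}} :
    (Sum.inr (Sum.inl f) : S.Gr.E) ∈ S.m2 C ↔ f.1 ∈ C := Iff.rfl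

lemma not_mem_m1_inr {C : Set S.G1.E} {y} : (Sum.inr y : S.Gr.E) ∉ S.m1 C := fun h => h

lemma eps_not_mem_m1 {C : Set S.G1.E} : S.eps ∉ S.m1 C := fun h => h

lemma eps_not_mem_m2 {C : Set S.G2.E} : S.eps ∉ S.m2 C := fun h => h

lemma e1_not_mem_proj1 {C : Set S.Gr.E} : S.e1 ∉ S.proj1 C := by
  rintro ⟨h, -⟩
  exact h rfl

lemma e2_not_mem_proj2 {C : Set S.Gr.E} : S.e2 ∉ S.proj2 C := by
  rintro ⟨h, -⟩
  exact h rfl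

lemma proj1_m1 (C : Set S.G1.E) : S.proj1 (S.m1 C) = C \ {S.e1} := by
  ext e
  constructor
  · rintro ⟨h, hmem⟩
    exact ⟨hmem, h⟩
  · rintro ⟨hC, hne⟩
    exact ⟨hne, hC⟩

lemma proj2_m2 (C : Set S.G2.E) : S.proj2 (S.m2 C) = C \ {S.e2} := by
  ext e
  constructor
  · rintro ⟨h, hmem⟩
    exact ⟨hmem, h⟩
  · rintro ⟨hC, hne⟩
    exact ⟨hne, hC⟩

lemma m1_shape {C : Set S.G1.E} :
    ∀ {x : S.Gr.E}, x ∈ S.m1 C → ∃ f, x = Sum.inl f ∧ f.1 ∈ C := by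
  rintro (f | y) h
  · exact ⟨f, rfl, h⟩
  · exact h.elim

lemma m2_shape {C : Set S.G2.E} :
    ∀ {x : S.Gr.E}, x ∈ S.m2 C → ∃ f, x = Sum.inr (Sum.inl f) ∧ f.1 ∈ C := by
  rintro (f | f | u) h
  · exact h.elim
  · exact ⟨f, rfl, h⟩
  · exact h.elim

lemma m1_diff (C : Set S.G1.E) : S.m1 (C \ {S.e1}) = S.m1 C := by
  ext x
  cases x with
  | inl f => exact ⟨fun h => h.1, fun h => ⟨h, fun hh => f.2 hh⟩⟩
  | inr y => exact Iff.rfl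

lemma m2_diff (C : Set S.G2.E) : S.m2 (C \ {S.e2}) = S.m2 C := by
  ext x
  rcases x with f | f | u
  · exact Iff.rfl
  · exact ⟨fun h => h.1, fun h => ⟨h, fun hh => f.2 hh⟩⟩
  · exact Iff.rfl

/-- Degree transfer lemmas. -/
lemma deg_m1_inl (C : Set S.G1.E) (a : S.G1.V) :
    S.Gr.degOn (S.m1 C) (Sum.inl a) = S.G1.degOn (C \ {S.e1}) a := by
  refine ncard_bij' (Sum.elim Subtype.val (fun _ => S.e1)) ?_ ?_ ?_
  · rintro x ⟨hm, hinc⟩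
    obtain ⟨f, rfl, hf⟩ := m1_shape S hm
    rw [ends_inl, mem_map_inl] at hinc
    exact ⟨⟨hf, f.2⟩, hinc⟩
  · rintro x ⟨hm, -⟩ x' ⟨hm', -⟩ hff
    obtain ⟨f, rfl, -⟩ := m1_shape S hm
    obtain ⟨f', rfl, -⟩ := m1_shape S hm'
    simp only [Sum.elim_inl] at hff
    exact congrArg Sum.inl (Subtype.ext hff)
  · rintro e ⟨⟨hC, hne⟩, hinc⟩
    exact ⟨Sum.inl ⟨e, hne⟩, ⟨hC, (mem_map_inl S).mpr hinc⟩, rfl⟩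

lemma deg_m1_inr (C : Set S.G1.E) (w : {w : S.G2.V // w ≠ S.v2}) :
    S.Gr.degOn (S.m1 C) (Sum.inr w) = 0 := by
  refine degOn_eq_zero ?_
  intro x hm
  obtain ⟨f, rfl, -⟩ := m1_shape S hm
  rw [ends_inl]
  exact inr_not_mem_map_inl S

lemma deg_m2_inr (C : Set S.G2.E) (w : S.G2.V) (hw : w ≠ S.v2) :
    S.Gr.degOn (S.m2 C) (Sum.inr ⟨w, hw⟩) = S.G2.degOn (C \ {S.e2}) w := by
  refine ncard_bij' (Sum.elim (fun _ => S.e2) (Sum.elim Subtype.val (fun _ => S.e2))) ?_ ?_ ?_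
  · rintro x ⟨hm, hinc⟩
    obtain ⟨f, rfl, hf⟩ := m2_shape S hm
    rw [ends_inr, mem_map_ι2_inr] at hinc
    exact ⟨⟨hf, f.2⟩, hinc⟩
  · rintro x ⟨hm, -⟩ x' ⟨hm', -⟩ hff
    obtain ⟨f, rfl, -⟩ := m2_shape S hm
    obtain ⟨f', rfl, -⟩ := m2_shape S hm'
    simp only [Sum.elim_inr, Sum.elim_inl] at hff
    exact congrArg (fun z => Sum.inr (Sum.inl z)) (Subtype.ext hff)
  · rintro e ⟨⟨hC, hne⟩, hinc⟩
    exact ⟨Sum.inr (Sum.inl ⟨e, hne⟩), ⟨hC, (mem_map_ι2_inr S).mpr hinc⟩, rfl⟩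

lemma deg_m2_inl_v1 (C : Set S.G2.E) :
    S.Gr.degOn (S.m2 C) (Sum.inl S.v1) = S.G2.degOn (C \ {S.e2}) S.v2 := by
  refine ncard_bij' (Sum.elim (fun _ => S.e2) (Sum.elim Subtype.val (fun _ => S.e2))) ?_ ?_ ?_
  · rintro x ⟨hm, hinc⟩
    obtain ⟨f, rfl, hf⟩ := m2_shape S hm
    rw [ends_inr, mem_map_ι2_inl] at hinc
    exact ⟨⟨hf, f.2⟩, hinc.2⟩
  · rintro x ⟨hm, -⟩ x' ⟨hm', -⟩ hff
    obtain ⟨f, rfl, -⟩ := m2_shape S hm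
    obtain ⟨f', rfl, -⟩ := m2_shape S hm'
    simp only [Sum.elim_inr, Sum.elim_inl] at hff
    exact congrArg (fun z => Sum.inr (Sum.inl z)) (Subtype.ext hff)
  · rintro e ⟨⟨hC, hne⟩, hinc⟩
    exact ⟨Sum.inr (Sum.inl ⟨e, hne⟩), ⟨hC, (mem_map_ι2_inl S).mpr ⟨rfl, hinc⟩⟩, rfl⟩

lemma deg_m2_inl (C : Set S.G2.E) {a : S.G1.V} (ha : a ≠ S.v1) :
    S.Gr.degOn (S.m2 C) (Sum.inl a) = 0 := by
  refine degOn_eq_zero ?_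
  intro x hm
  obtain ⟨f, rfl, -⟩ := m2_shape S hm
  rw [ends_inr, mem_map_ι2_inl]
  rintro ⟨rfl, -⟩
  exact ha rfl

/-- Partition of an arbitrary edge set of the identification. -/
lemma set_decomp (C : Set S.Gr.E) :
    C = S.m1 (S.proj1 C) ∪ (S.m2 (S.proj2 C) ∪ C ∩ {S.eps}) := by
  ext x
  rcases x with f | f | u
  · simp only [Set.mem_union, Set.mem_inter_iff, Set.mem_singleton_iff]
    constructor
    · intro h
      exact Or.inl ⟨f.2, h⟩
    · rintro (⟨hw, h⟩ | ⟨h | ⟨h, -⟩⟩)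
      · exact h
      · exact absurd h (fun hh => hh)
      · exact h
  · simp only [Set.mem_union, Set.mem_inter_iff, Set.mem_singleton_iff]
    constructor
    · intro h
      exact Or.inr (Or.inl ⟨f.2, h⟩)
    · rintro (h | ⟨⟨hw, h⟩ | ⟨h, -⟩⟩)
      · exact absurd h (fun hh => hh)
      · exact h
      · exact h
  · cases u
    simp only [Set.mem_union, Set.mem_inter_iff, Set.mem_singleton_iff]
    constructor
    · intro h
      exact Or.inr (Or.inr ⟨h, rfl⟩)
    · rintro (h | ⟨h | ⟨h, -⟩⟩)
      · exact absurd h (fun hh => hh)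
      · exact absurd h (fun hh => hh)
      · exact h

lemma degOn_parts (C : Set S.Gr.E) (X : S.Gr.V) :
    S.Gr.degOn C X = S.Gr.degOn (S.m1 (S.proj1 C)) X
      + S.Gr.degOn (S.m2 (S.proj2 C)) X + S.Gr.degOn (C ∩ {S.eps}) X := by
  have hd1 : Disjoint (S.m2 (S.proj2 C)) (C ∩ {S.eps}) := by
    rw [Set.disjoint_left]
    rintro (f | f | u) hm ⟨-, hx⟩
    · exact hm
    · rw [Set.mem_singleton_iff] at hx
      exact absurd hx (by rintro ⟨⟩)
    · exact hm
  have hd2 : Disjoint (S.m1 (S.proj1 C)) (S.m2 (S.proj2 C) ∪ C ∩ {S.eps}) := by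
    rw [Set.disjoint_left]
    rintro (f | f | u) hm hx
    · rcases hx with h | ⟨-, h⟩
      · exact h
      · rw [Set.mem_singleton_iff] at h
        exact absurd h (by rintro ⟨⟩)
    · exact hm
    · exact hm
  calc S.Gr.degOn C X
      = S.Gr.degOn (S.m1 (S.proj1 C) ∪ (S.m2 (S.proj2 C) ∪ C ∩ {S.eps})) X :=
        degOn_congr (set_decomp S C) X
    _ = _ := by rw [degOn_union hd2, degOn_union hd1]; ring

lemma degOn_eps_part {C : Set S.Gr.E} (h : S.eps ∈ C) (X : S.Gr.V) :
    S.Gr.degOn (C ∩ {S.eps}) X = if X ∈ S.Gr.ends S.eps then 1 else 0 := by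
  rw [show C ∩ {S.eps} = {S.eps} by
    ext x; simp only [Set.mem_inter_iff, Set.mem_singleton_iff]
    exact ⟨fun hh => hh.2, fun hh => ⟨hh ▸ h, hh⟩⟩]
  convert degOn_singleton S.eps X

lemma degOn_eps_part_empty {C : Set S.Gr.E} (h : S.eps ∉ C) (X : S.Gr.V) :
    S.Gr.degOn (C ∩ {S.eps}) X = 0 := by
  rw [show C ∩ {S.eps} = ∅ by
    ext x; simp only [Set.mem_inter_iff, Set.mem_singleton_iff, Set.mem_empty_iff_false,
      iff_false]
    rintro ⟨hx, rfl⟩; exact h hx]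
  exact degOn_empty X

end VSetup


namespace VSetup

open MGraph

variable (S : VSetup)

/-- Projection of the identified vertices to `G1`. -/
def pi1 : S.Gr.V → S.G1.V := Sum.elim id (fun _ => S.v1)

/-- Projection of the identified vertices to `G2`. -/
def pi2 : S.Gr.V → S.G2.V := Sum.elim (fun _ => S.v2) (fun w => w.1)

lemma pi1_inl (a : S.G1.V) : S.pi1 (Sum.inl a) = a := rfl

lemma pi1_ι2 (w : S.G2.V) : S.pi1 (S.ι2 w) = S.v1 := by
  by_cases hw : w = S.v2
  · rw [hw, S.ι2_v2]; rfl
  · rw [S.ι2_ne hw]; rfl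

lemma pi2_ι2 (w : S.G2.V) : S.pi2 (S.ι2 w) = w := by
  by_cases hw : w = S.v2
  · rw [hw, S.ι2_v2]; rfl
  · rw [S.ι2_ne hw]; rfl

lemma pi2_inl (a : S.G1.V) : S.pi2 (Sum.inl a) = S.v2 := rfl

lemma m1_empty : S.m1 ∅ = ∅ := by
  ext x
  rcases x with f | y
  · exact Iff.rfl
  · exact Iff.rfl

lemma m2_empty : S.m2 ∅ = ∅ := by
  ext x
  rcases x with f | f | u
  · exact Iff.rfl
  · exact Iff.rfl
  · exact Iff.rfl

lemma mem_ends_eps_inl {a : S.G1.V} :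
    (Sum.inl a : S.Gr.V) ∈ S.Gr.ends S.eps ↔ a = S.u1 := by
  rw [ends_eps, Sym2.mem_iff]
  constructor
  · rintro (h | h)
    · exact Sum.inl_injective h
    · rw [S.ι2_ne S.hu2v2] at h
      exact absurd h Sum.inl_ne_inr
  · rintro rfl
    exact Or.inl rfl

lemma mem_ends_eps_inr {w : S.G2.V} {hw : w ≠ S.v2} :
    (Sum.inr ⟨w, hw⟩ : S.Gr.V) ∈ S.Gr.ends S.eps ↔ w = S.u2 := by
  rw [ends_eps, Sym2.mem_iff]
  constructor
  · rintro (h | h)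
    · exact absurd h Sum.inr_ne_inl
    · rw [S.ι2_ne S.hu2v2] at h
      exact congrArg Subtype.val (Sum.inr_injective h)
  · rintro rfl
    rw [S.ι2_ne S.hu2v2]
    exact Or.inr rfl

lemma lift1 {S1 : Set S.G1.E} {T : Set S.Gr.E}
    (hT : ∀ e, e ∈ S1 → ∀ hne : e ≠ S.e1, (Sum.inl ⟨e, hne⟩ : S.Gr.E) ∈ T)
    (h1T : S.e1 ∈ S1 → S.Gr.ReachOn T (Sum.inl S.u1) (Sum.inl S.v1))
    {a b : S.G1.V} (h : S.G1.ReachOn S1 a b) :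
    S.Gr.ReachOn T (Sum.inl a) (Sum.inl b) := by
  induction h with
  | refl => exact Relation.ReflTransGen.refl
  | @tail m c hr hadj ih =>
    refine ih.trans ?_
    obtain ⟨e, he, hends⟩ := hadj
    by_cases hne : e = S.e1
    · subst hne
      rw [S.h1] at hends
      rcases Sym2.eq_iff.mp hends with ⟨rfl, rfl⟩ | ⟨rfl, rfl⟩
      · exact h1T he
      · exact (h1T he).symm
    · exact Relation.ReflTransGen.single ⟨Sum.inl ⟨e, hne⟩, hT e he hne,
        by rw [ends_inl, hends, Sym2.map_pair_eq]⟩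

lemma lift2 {S2 : Set S.G2.E} {T : Set S.Gr.E}
    (hT : ∀ e, e ∈ S2 → ∀ hne : e ≠ S.e2, (Sum.inr (Sum.inl ⟨e, hne⟩) : S.Gr.E) ∈ T)
    (h2T : S.e2 ∈ S2 → S.Gr.ReachOn T (S.ι2 S.u2) (S.ι2 S.v2))
    {a b : S.G2.V} (h : S.G2.ReachOn S2 a b) :
    S.Gr.ReachOn T (S.ι2 a) (S.ι2 b) := by
  induction h with
  | refl => exact Relation.ReflTransGen.refl
  | @tail m c hr hadj ih =>
    refine ih.trans ?_
    obtain ⟨e, he, hends⟩ := hadj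
    by_cases hne : e = S.e2
    · subst hne
      rw [S.h2] at hends
      rcases Sym2.eq_iff.mp hends with ⟨rfl, rfl⟩ | ⟨rfl, rfl⟩
      · exact h2T he
      · exact (h2T he).symm
    · exact Relation.ReflTransGen.single ⟨Sum.inr (Sum.inl ⟨e, hne⟩), hT e he hne,
        by rw [ends_inr, hends, Sym2.map_pair_eq]⟩

lemma proj1_reach {C : Set S.Gr.E} {T1 : Set S.G1.E}
    (hA : ∀ f : {e : S.G1.E // e ≠ S.e1}, (Sum.inl f : S.Gr.E) ∈ C → f.1 ∈ T1)
    (hE : S.eps ∈ C → S.e1 ∈ T1) {X Y : S.Gr.V}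
    (h : S.Gr.ReachOn C X Y) : S.G1.ReachOn T1 (S.pi1 X) (S.pi1 Y) := by
  induction h with
  | refl => exact Relation.ReflTransGen.refl
  | @tail m c hr hadj ih =>
    refine ih.trans ?_
    obtain ⟨x, hx, hends⟩ := hadj
    rcases x with f | f | u
    · obtain ⟨p, q, -, hpq⟩ := ends_pair f.1
      rw [ends_inl, hpq, Sym2.map_pair_eq] at hends
      rcases Sym2.eq_iff.mp hends with ⟨rfl, rfl⟩ | ⟨rfl, rfl⟩
      · exact Relation.ReflTransGen.single ⟨f.1, hA f hx, hpq⟩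
      · exact Relation.ReflTransGen.single ⟨f.1, hA f hx, hpq.trans Sym2.eq_swap⟩
    · obtain ⟨p, q, -, hpq⟩ := ends_pair f.1
      rw [ends_inr, hpq, Sym2.map_pair_eq] at hends
      rcases Sym2.eq_iff.mp hends with ⟨rfl, rfl⟩ | ⟨rfl, rfl⟩ <;>
        rw [pi1_ι2, pi1_ι2]
    · cases u
      have hends2 : s(Sum.inl S.u1, S.ι2 S.u2) = s(m, c) := by
        rw [← ends_eps]; exact hends
      have he1T : S.e1 ∈ T1 := hE hx
      rcases Sym2.eq_iff.mp hends2 with ⟨rfl, rfl⟩ | ⟨rfl, rfl⟩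
      · rw [pi1_inl, pi1_ι2]
        exact Relation.ReflTransGen.single ⟨S.e1, he1T, S.h1⟩
      · rw [pi1_inl, pi1_ι2]
        exact Relation.ReflTransGen.single ⟨S.e1, he1T, S.h1.trans Sym2.eq_swap⟩

lemma proj2_reach {C : Set S.Gr.E} {T2 : Set S.G2.E}
    (hA : ∀ f : {e : S.G2.E // e ≠ S.e2}, (Sum.inr (Sum.inl f) : S.Gr.E) ∈ C → f.1 ∈ T2)
    (hE : S.eps ∈ C → S.e2 ∈ T2) {X Y : S.Gr.V}
    (h : S.Gr.ReachOn C X Y) : S.G2.ReachOn T2 (S.pi2 X) (S.pi2 Y) := by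
  induction h with
  | refl => exact Relation.ReflTransGen.refl
  | @tail m c hr hadj ih =>
    refine ih.trans ?_
    obtain ⟨x, hx, hends⟩ := hadj
    rcases x with f | f | u
    · obtain ⟨p, q, -, hpq⟩ := ends_pair f.1
      rw [ends_inl, hpq, Sym2.map_pair_eq] at hends
      rcases Sym2.eq_iff.mp hends with ⟨rfl, rfl⟩ | ⟨rfl, rfl⟩ <;>
        rw [pi2_inl, pi2_inl]
    · obtain ⟨p, q, -, hpq⟩ := ends_pair f.1
      rw [ends_inr, hpq, Sym2.map_pair_eq] at hends
      rcases Sym2.eq_iff.mp hends with ⟨rfl, rfl⟩ | ⟨rfl, rfl⟩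
      · rw [pi2_ι2, pi2_ι2]
        exact Relation.ReflTransGen.single ⟨f.1, hA f hx, hpq⟩
      · rw [pi2_ι2, pi2_ι2]
        exact Relation.ReflTransGen.single ⟨f.1, hA f hx, hpq.trans Sym2.eq_swap⟩
    · cases u
      have hends2 : s(Sum.inl S.u1, S.ι2 S.u2) = s(m, c) := by
        rw [← ends_eps]; exact hends
      have he2T : S.e2 ∈ T2 := hE hx
      rcases Sym2.eq_iff.mp hends2 with ⟨rfl, rfl⟩ | ⟨rfl, rfl⟩
      · rw [pi2_inl, pi2_ι2]
        exact Relation.ReflTransGen.single ⟨S.e2, he2T, S.h2.trans Sym2.eq_swap⟩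
      · rw [pi2_inl, pi2_ι2]
        exact Relation.ReflTransGen.single ⟨S.e2, he2T, S.h2⟩

lemma reach_u1_v1 {C2 : Set S.G2.E} (hC2 : S.G2.IsCycle C2) (he2 : S.e2 ∈ C2)
    {T : Set S.Gr.E} (heps : S.eps ∈ T)
    (hT : ∀ e, e ∈ C2 → ∀ hne : e ≠ S.e2, (Sum.inr (Sum.inl ⟨e, hne⟩) : S.Gr.E) ∈ T) :
    S.Gr.ReachOn T (Sum.inl S.u1) (Sum.inl S.v1) := by
  have hpath : S.G2.ReachOn (C2 \ {S.e2}) S.u2 S.v2 := cycle_reach_minus hC2 he2 S.h2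
  have hlift := lift2 S (S2 := C2 \ {S.e2}) (T := T)
    (fun e he hne => hT e he.1 hne) (fun h => absurd h (fun hh => hh.2 rfl)) hpath
  rw [S.ι2_v2] at hlift
  exact Relation.ReflTransGen.head ⟨S.eps, heps, ends_eps S⟩ hlift

lemma cycle_m1 {C : Set S.G1.E} (hC : S.G1.IsCycle C) (he1 : S.e1 ∉ C) :
    S.Gr.IsCycle (S.m1 C) := by
  obtain ⟨e0, he0⟩ := hC.1
  have hdiff : C \ {S.e1} = C := by
    ext x
    exact ⟨fun h => h.1, fun h => ⟨h, fun hh => he1 (hh ▸ h)⟩⟩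
  refine ⟨⟨Sum.inl ⟨e0, fun hh => he1 (hh ▸ he0)⟩, he0⟩, ?_, ?_⟩
  · intro X
    rcases X with a | w
    · rw [deg_m1_inl, hdiff]
      exact hC.2.1 a
    · exact Or.inl (deg_m1_inr S C w)
  · intro x hx y hy X Y hX hY
    obtain ⟨f, rfl, hf⟩ := m1_shape S hx
    obtain ⟨g, rfl, hg⟩ := m1_shape S hy
    rw [ends_inl] at hX hY
    obtain ⟨p, hp, rfl⟩ := Sym2.mem_map.mp hX
    obtain ⟨q, hq, rfl⟩ := Sym2.mem_map.mp hY
    have hr : S.G1.ReachOn C p q := hC.2.2 f.1 hf g.1 hg p q hp hq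
    exact lift1 S (fun e he hne => he) (fun h => absurd h he1) hr

lemma cycle_m2 {C : Set S.G2.E} (hC : S.G2.IsCycle C) (he2 : S.e2 ∉ C) :
    S.Gr.IsCycle (S.m2 C) := by
  obtain ⟨e0, he0⟩ := hC.1
  have hdiff : C \ {S.e2} = C := by
    ext x
    exact ⟨fun h => h.1, fun h => ⟨h, fun hh => he2 (hh ▸ h)⟩⟩
  refine ⟨⟨Sum.inr (Sum.inl ⟨e0, fun hh => he2 (hh ▸ he0)⟩), he0⟩, ?_, ?_⟩
  · intro X
    rcases X with a | w
    · by_cases ha : a = S.v1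
      · subst ha
        rw [deg_m2_inl_v1, hdiff]
        exact hC.2.1 S.v2
      · exact Or.inl (deg_m2_inl S C ha)
    · obtain ⟨w, hw⟩ := w
      rw [deg_m2_inr, hdiff]
      exact hC.2.1 w
  · intro x hx y hy X Y hX hY
    obtain ⟨f, rfl, hf⟩ := m2_shape S hx
    obtain ⟨g, rfl, hg⟩ := m2_shape S hy
    rw [ends_inr] at hX hY
    obtain ⟨p, hp, rfl⟩ := Sym2.mem_map.mp hX
    obtain ⟨q, hq, rfl⟩ := Sym2.mem_map.mp hY
    have hr : S.G2.ReachOn C p q := hC.2.2 f.1 hf g.1 hg p q hp hq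
    exact lift2 S (fun e he hne => he) (fun h => absurd h he2) hr

lemma merge_parts (C1 : Set S.G1.E) (C2 : Set S.G2.E) (X : S.Gr.V) :
    S.Gr.degOn (S.merge C1 C2) X = S.Gr.degOn (S.m1 C1) X + S.Gr.degOn (S.m2 C2) X
      + (if X ∈ S.Gr.ends S.eps then 1 else 0) := by
  have hset : S.merge C1 C2 = S.m1 C1 ∪ (S.m2 C2 ∪ {S.eps}) := by
    rw [merge]
    ext x
    simp only [Set.mem_insert_iff, Set.mem_union, Set.mem_singleton_iff]
    tauto
  have hd1 : Disjoint (S.m2 C2) ({S.eps} : Set S.Gr.E) := by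
    rw [Set.disjoint_left]
    rintro (f | f | u) hm hx
    · exact hm
    · rw [Set.mem_singleton_iff] at hx
      exact absurd hx (by rintro ⟨⟩)
    · exact hm
  have hd2 : Disjoint (S.m1 C1) (S.m2 C2 ∪ ({S.eps} : Set S.Gr.E)) := by
    rw [Set.disjoint_left]
    rintro (f | f | u) hm hx
    · rcases hx with h | h
      · exact h
      · rw [Set.mem_singleton_iff] at h
        exact absurd h (by rintro ⟨⟩)
    · exact hm
    · exact hm
  rw [degOn_congr hset, degOn_union hd2, degOn_union hd1, degOn_singleton]
  ring

lemma cycle_merge {C1 : Set S.G1.E} {C2 : Set S.G2.E}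
    (hC1 : S.G1.IsCycle C1) (he1 : S.e1 ∈ C1)
    (hC2 : S.G2.IsCycle C2) (he2 : S.e2 ∈ C2) :
    S.Gr.IsCycle (S.merge C1 C2) := by
  have hu1e : S.u1 ∈ S.G1.ends S.e1 := by rw [S.h1]; exact Sym2.mem_mk_left _ _
  have hv1e : S.v1 ∈ S.G1.ends S.e1 := by rw [S.h1]; exact Sym2.mem_mk_right _ _
  have hu2e : S.u2 ∈ S.G2.ends S.e2 := by rw [S.h2]; exact Sym2.mem_mk_left _ _
  have hv2e : S.v2 ∈ S.G2.ends S.e2 := by rw [S.h2]; exact Sym2.mem_mk_right _ _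
  have hd1u : S.G1.degOn (C1 \ {S.e1}) S.u1 + 1 = 2 := by
    rw [degOn_diff_singleton_mem he1 hu1e]
    exact hC1.deg_eq_two he1 hu1e
  have hd1v : S.G1.degOn (C1 \ {S.e1}) S.v1 + 1 = 2 := by
    rw [degOn_diff_singleton_mem he1 hv1e]
    exact hC1.deg_eq_two he1 hv1e
  have hd2u : S.G2.degOn (C2 \ {S.e2}) S.u2 + 1 = 2 := by
    rw [degOn_diff_singleton_mem he2 hu2e]
    exact hC2.deg_eq_two he2 hu2e
  have hd2v : S.G2.degOn (C2 \ {S.e2}) S.v2 + 1 = 2 := by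
    rw [degOn_diff_singleton_mem he2 hv2e]
    exact hC2.deg_eq_two he2 hv2e
  refine ⟨⟨S.eps, Set.mem_insert _ _⟩, ?_, ?_⟩
  · intro X
    rw [merge_parts]
    rcases X with a | w
    · rw [deg_m1_inl]
      by_cases hau : a = S.u1
      · subst hau
        rw [deg_m2_inl S C2 S.hu1v1, if_pos ((mem_ends_eps_inl S).mpr rfl)]
        right; omega
      · by_cases hav : a = S.v1
        · subst hav
          rw [deg_m2_inl_v1, if_neg (fun hh => hau ((mem_ends_eps_inl S).mp hh))]
          right; omega
        · rw [deg_m2_inl S C2 hav, if_neg (fun hh => hau ((mem_ends_eps_inl S).mp hh))]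
          have hne : a ∉ S.G1.ends S.e1 := by
            rw [S.h1, Sym2.mem_iff]
            rintro (rfl | rfl)
            exacts [hau rfl, hav rfl]
          rw [degOn_diff_singleton_not_mem hne]
          rcases hC1.2.1 a with h | h <;> simp [h]
    · obtain ⟨w, hw⟩ := w
      rw [deg_m1_inr, deg_m2_inr]
      by_cases hwu : w = S.u2
      · subst hwu
        rw [if_pos ((mem_ends_eps_inr S).mpr rfl)]
        right; omega
      · rw [if_neg (fun hh => hwu ((mem_ends_eps_inr S).mp hh))]
        have hne : w ∉ S.G2.ends S.e2 := by
          rw [S.h2, Sym2.mem_iff]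
          rintro (rfl | rfl)
          exacts [hwu rfl, hw rfl]
        rw [degOn_diff_singleton_not_mem hne]
        rcases hC2.2.1 w with h | h <;> simp [h]
  · -- connectivity
    have hmT : ∀ e, e ∈ C1 → ∀ hne : e ≠ S.e1, (Sum.inl ⟨e, hne⟩ : S.Gr.E) ∈ S.merge C1 C2 :=
      fun e he hne => Set.mem_insert_of_mem _ (Or.inl he)
    have hmT2 : ∀ e, e ∈ C2 → ∀ hne : e ≠ S.e2,
        (Sum.inr (Sum.inl ⟨e, hne⟩) : S.Gr.E) ∈ S.merge C1 C2 :=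
      fun e he hne => Set.mem_insert_of_mem _ (Or.inr he)
    have hepsT : S.eps ∈ S.merge C1 C2 := Set.mem_insert _ _
    have hu1v1r : S.Gr.ReachOn (S.merge C1 C2) (Sum.inl S.u1) (Sum.inl S.v1) :=
      reach_u1_v1 S hC2 he2 hepsT hmT2
    have hstep : S.Gr.AdjOn (S.merge C1 C2) (Sum.inl S.u1) (S.ι2 S.u2) :=
      ⟨S.eps, hepsT, ends_eps S⟩
    have h2T : S.Gr.ReachOn (S.merge C1 C2) (S.ι2 S.u2) (S.ι2 S.v2) := by
      rw [S.ι2_v2]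
      exact Relation.ReflTransGen.trans (Relation.ReflTransGen.single hstep.symm) hu1v1r
    have haux : ∀ x ∈ S.merge C1 C2, ∀ X ∈ S.Gr.ends x,
        S.Gr.ReachOn (S.merge C1 C2) X (Sum.inl S.u1) := by
      intro x hx X hX
      rcases Set.mem_insert_iff.mp hx with rfl | hx'
      · rw [ends_eps, Sym2.mem_iff] at hX
        rcases hX with rfl | rfl
        · exact Relation.ReflTransGen.refl
        · exact Relation.ReflTransGen.single hstep.symm
      · rcases hx' with h1 | h2
        · obtain ⟨f, rfl, hf⟩ := m1_shape S h1
          rw [ends_inl] at hX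
          obtain ⟨p, hp, rfl⟩ := Sym2.mem_map.mp hX
          have hr : S.G1.ReachOn C1 p S.u1 := hC1.2.2 f.1 hf S.e1 he1 p S.u1 hp hu1e
          exact lift1 S hmT (fun _ => hu1v1r) hr
        · obtain ⟨f, rfl, hf⟩ := m2_shape S h2
          rw [ends_inr] at hX
          obtain ⟨p, hp, rfl⟩ := Sym2.mem_map.mp hX
          have hr : S.G2.ReachOn C2 p S.u2 := hC2.2.2 f.1 hf S.e2 he2 p S.u2 hp hu2e
          exact (lift2 S hmT2 (fun _ => h2T) hr).trans
            (Relation.ReflTransGen.single hstep.symm)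
    intro x hx y hy X Y hX hY
    exact (haux x hx X hX).trans (haux y hy Y hY).symm

end VSetup


namespace VSetup

open MGraph

variable (S : VSetup)

lemma purity {C : Set S.Gr.E} (hC : S.Gr.IsCycle C) (heps : S.eps ∉ C) :
    S.proj1 C = ∅ ∨ S.proj2 C = ∅ := by
  by_contra hcon
  push_neg at hcon
  obtain ⟨h1ne, h2ne⟩ := hcon
  obtain ⟨ef, hfne, hfC⟩ := h1ne
  obtain ⟨eg, hgne, hgC⟩ := h2ne
  have hepsz := fun X => S.degOn_eps_part_empty heps X
  have hparts := fun X => S.degOn_parts C X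
  have hother : ∀ a : S.G1.V, a ≠ S.v1 →
      S.Gr.degOn (S.m1 (S.proj1 C)) (Sum.inl a) = S.Gr.degOn C (Sum.inl a) := by
    intro a ha
    have h := hparts (Sum.inl a)
    rw [hepsz, S.deg_m2_inl _ ha] at h
    omega
  have hinr : ∀ w, S.Gr.degOn (S.m1 (S.proj1 C)) (Sum.inr w) = 0 :=
    fun w => S.deg_m1_inr _ w
  have heven1 : Even (S.Gr.degOn (S.m1 (S.proj1 C)) (Sum.inl S.v1)) := by
    refine parity_one _ _ ?_
    rintro (a | w) hX
    · have ha : a ≠ S.v1 := fun hh => hX (congrArg Sum.inl hh)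
      rw [hother a ha]
      rcases hC.2.1 (Sum.inl a) with h | h <;> simp [h]
    · rw [hinr]
      exact Even.zero
  have hsum : S.Gr.degOn (S.m1 (S.proj1 C)) (Sum.inl S.v1)
      + S.Gr.degOn (S.m2 (S.proj2 C)) (Sum.inl S.v1) = S.Gr.degOn C (Sum.inl S.v1) := by
    have h := hparts (Sum.inl S.v1)
    rw [hepsz] at h
    omega
  obtain ⟨pf, qf, hpqne, hpq⟩ := ends_pair ef
  obtain ⟨pg, qg, hpgne, hpg⟩ := ends_pair eg
  have hd2cases : S.Gr.degOn (S.m2 (S.proj2 C)) (Sum.inl S.v1) = 0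
      ∨ (S.Gr.degOn (S.m2 (S.proj2 C)) (Sum.inl S.v1) = 2
          ∧ S.Gr.degOn (S.m1 (S.proj1 C)) (Sum.inl S.v1) = 0) := by
    obtain ⟨k, hk⟩ := heven1
    rcases hC.2.1 (Sum.inl S.v1) with h | h <;> rw [h] at hsum <;> omega
  rcases hd2cases with hd2 | ⟨hd2, hd1⟩
  · have hclosed : ∀ X ∈ {X : S.Gr.V | ∃ a, X = Sum.inl a}, ∀ Y,
        S.Gr.AdjOn C X Y → Y ∈ {X : S.Gr.V | ∃ a, X = Sum.inl a} := by
      rintro X ⟨a, rfl⟩ Y ⟨x, hx, hends⟩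
      rcases x with f | f | u
      · have hY : Y ∈ S.Gr.ends (Sum.inl f) := by
          rw [hends]; exact Sym2.mem_mk_right _ _
        rw [ends_inl] at hY
        obtain ⟨p, -, rfl⟩ := Sym2.mem_map.mp hY
        exact ⟨p, rfl⟩
      · exfalso
        have hX : (Sum.inl a : S.Gr.V) ∈ S.Gr.ends (Sum.inr (Sum.inl f)) := by
          rw [hends]; exact Sym2.mem_mk_left _ _
        rw [ends_inr, mem_map_ι2_inl] at hX
        obtain ⟨rfl, hv2⟩ := hX
        have hmem : (Sum.inr (Sum.inl f) : S.Gr.E) ∈ S.m2 (S.proj2 C) := ⟨f.2, hx⟩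
        refine not_mem_of_degOn_zero hd2 hmem ?_
        rw [ends_inr, mem_map_ι2_inl]
        exact ⟨rfl, hv2⟩
      · cases u
        exact absurd hx heps
    -- an endpoint of the G2-side edge that is not of the form inl
    have hY0 : ∃ w : {w : S.G2.V // w ≠ S.v2},
        (Sum.inr w : S.Gr.V) ∈ S.Gr.ends (Sum.inr (Sum.inl ⟨eg, hgne⟩)) := by
      by_cases hpv : pg = S.v2
      · have hqv : qg ≠ S.v2 := fun hh => hpgne (hpv.trans hh.symm)
        refine ⟨⟨qg, hqv⟩, ?_⟩
        rw [ends_inr, ← S.ι2_ne hqv, hpg, Sym2.map_pair_eq]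
        exact Sym2.mem_mk_right _ _
      · refine ⟨⟨pg, hpv⟩, ?_⟩
        rw [ends_inr, ← S.ι2_ne hpv, hpg, Sym2.map_pair_eq]
        exact Sym2.mem_mk_left _ _
    obtain ⟨w0, hw0⟩ := hY0
    have hX0 : (Sum.inl pf : S.Gr.V) ∈ S.Gr.ends (Sum.inl ⟨ef, hfne⟩) := by
      rw [ends_inl, hpq, Sym2.map_pair_eq]
      exact Sym2.mem_mk_left _ _
    have hreach := hC.2.2 _ hfC _ hgC (Sum.inl pf) (Sum.inr w0) hX0 hw0
    obtain ⟨a, ha⟩ := reach_closed hclosed hreach ⟨pf, rfl⟩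
    exact Sum.inr_ne_inl ha
  · have hclosed : ∀ X ∈ {X : S.Gr.V | X = Sum.inl S.v1 ∨ ∃ w, X = Sum.inr w}, ∀ Y,
        S.Gr.AdjOn C X Y → Y ∈ {X : S.Gr.V | X = Sum.inl S.v1 ∨ ∃ w, X = Sum.inr w} := by
      rintro X hX Y ⟨x, hx, hends⟩
      rcases x with f | f | u
      · exfalso
        have hXm : X ∈ S.Gr.ends (Sum.inl f) := by
          rw [hends]; exact Sym2.mem_mk_left _ _
        rw [ends_inl] at hXm
        obtain ⟨p, hp, rfl⟩ := Sym2.mem_map.mp hXm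
        rcases hX with h | ⟨w, hw⟩
        · obtain rfl : p = S.v1 := Sum.inl_injective h
          have hmem : (Sum.inl f : S.Gr.E) ∈ S.m1 (S.proj1 C) := ⟨f.2, hx⟩
          refine not_mem_of_degOn_zero hd1 hmem ?_
          rw [ends_inl, mem_map_inl]
          exact hp
        · exact Sum.inl_ne_inr hw
      · have hY : Y ∈ S.Gr.ends (Sum.inr (Sum.inl f)) := by
          rw [hends]; exact Sym2.mem_mk_right _ _
        rw [ends_inr] at hY
        obtain ⟨p, -, rfl⟩ := Sym2.mem_map.mp hY
        by_cases hpv : p = S.v2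
        · rw [hpv, S.ι2_v2]
          exact Or.inl rfl
        · rw [S.ι2_ne hpv]
          exact Or.inr ⟨_, rfl⟩
      · cases u
        exact absurd hx heps
    -- an endpoint of the G1-side edge different from v1
    have hX0 : ∃ p : S.G1.V, p ≠ S.v1 ∧
        (Sum.inl p : S.Gr.V) ∈ S.Gr.ends (Sum.inl ⟨ef, hfne⟩) := by
      by_cases hpv : pf = S.v1
      · have hqv : qf ≠ S.v1 := fun hh => hpqne (hpv.trans hh.symm)
        refine ⟨qf, hqv, ?_⟩
        rw [ends_inl, hpq, Sym2.map_pair_eq]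
        exact Sym2.mem_mk_right _ _
      · refine ⟨pf, hpv, ?_⟩
        rw [ends_inl, hpq, Sym2.map_pair_eq]
        exact Sym2.mem_mk_left _ _
    obtain ⟨p0, hp0v, hp0⟩ := hX0
    have hY0 : (S.ι2 pg) ∈ S.Gr.ends (Sum.inr (Sum.inl ⟨eg, hgne⟩)) := by
      rw [ends_inr, hpg, Sym2.map_pair_eq]
      exact Sym2.mem_mk_left _ _
    have hY0K : S.ι2 pg ∈ {X : S.Gr.V | X = Sum.inl S.v1 ∨ ∃ w, X = Sum.inr w} := by
      by_cases hpv : pg = S.v2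
      · rw [hpv, S.ι2_v2]
        exact Or.inl rfl
      · rw [S.ι2_ne hpv]
        exact Or.inr ⟨_, rfl⟩
    have hreach := hC.2.2 _ hgC _ hfC (S.ι2 pg) (Sum.inl p0) hY0 hp0
    rcases reach_closed hclosed hreach hY0K with h | ⟨w, hw⟩
    · exact hp0v (Sum.inl_injective h)
    · exact Sum.inl_ne_inr hw

lemma eps_degs {C : Set S.Gr.E} (hC : S.Gr.IsCycle C) (heps : S.eps ∈ C) :
    S.Gr.degOn (S.m1 (S.proj1 C)) (Sum.inl S.u1) = 1 ∧
    S.Gr.degOn (S.m1 (S.proj1 C)) (Sum.inl S.v1) = 1 ∧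
    S.Gr.degOn (S.m2 (S.proj2 C)) (Sum.inl S.v1) = 1 ∧
    S.Gr.degOn (S.m2 (S.proj2 C)) (Sum.inr ⟨S.u2, S.hu2v2⟩) = 1 := by
  have hepst := fun X => S.degOn_eps_part heps X
  have hparts := fun X => S.degOn_parts C X
  have hdu1 : S.Gr.degOn C (Sum.inl S.u1) = 2 :=
    hC.deg_eq_two heps (by rw [ends_eps]; exact Sym2.mem_mk_left _ _)
  have hdu2 : S.Gr.degOn C (Sum.inr ⟨S.u2, S.hu2v2⟩) = 2 :=
    hC.deg_eq_two heps (by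
      rw [ends_eps, S.ι2_ne S.hu2v2]
      exact Sym2.mem_mk_right _ _)
  have ha : S.Gr.degOn (S.m1 (S.proj1 C)) (Sum.inl S.u1) = 1 := by
    have h := hparts (Sum.inl S.u1)
    rw [hepst, if_pos ((mem_ends_eps_inl S).mpr rfl), S.deg_m2_inl _ S.hu1v1, hdu1] at h
    omega
  have hd : S.Gr.degOn (S.m2 (S.proj2 C)) (Sum.inr ⟨S.u2, S.hu2v2⟩) = 1 := by
    have h := hparts (Sum.inr ⟨S.u2, S.hu2v2⟩)
    rw [hepst, if_pos ((mem_ends_eps_inr S).mpr rfl), S.deg_m1_inr, hdu2] at h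
    omega
  have hbodd : Odd (S.Gr.degOn (S.m1 (S.proj1 C)) (Sum.inl S.v1)) := by
    refine parity_two (S.m1 (S.proj1 C)) (Sum.inl S.u1) (Sum.inl S.v1)
      (fun hh => S.hu1v1 (Sum.inl_injective hh)) ?_ (by rw [ha]; exact odd_one)
    rintro (a | w) hXu hXv
    · have hau : a ≠ S.u1 := fun hh => hXu (congrArg Sum.inl hh)
      have hav : a ≠ S.v1 := fun hh => hXv (congrArg Sum.inl hh)
      have h := hparts (Sum.inl a)
      rw [hepst, if_neg (fun hh => hau ((mem_ends_eps_inl S).mp hh)),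
        S.deg_m2_inl _ hav] at h
      rcases hC.2.1 (Sum.inl a) with hh | hh <;> rw [hh] at h
      · exact ⟨0, by omega⟩
      · exact ⟨1, by omega⟩
    · rw [S.deg_m1_inr]
      exact Even.zero
  have hv1eps : (Sum.inl S.v1 : S.Gr.V) ∉ S.Gr.ends S.eps :=
    fun hh => S.hu1v1 ((mem_ends_eps_inl S).mp hh).symm
  have hsplit : S.Gr.degOn (S.m1 (S.proj1 C)) (Sum.inl S.v1)
      + S.Gr.degOn (S.m2 (S.proj2 C)) (Sum.inl S.v1) = S.Gr.degOn C (Sum.inl S.v1) := by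
    have h := hparts (Sum.inl S.v1)
    rw [hepst, if_neg hv1eps] at h
    omega
  obtain ⟨k, hk⟩ := hbodd
  have hbc : S.Gr.degOn (S.m1 (S.proj1 C)) (Sum.inl S.v1) = 1
      ∧ S.Gr.degOn (S.m2 (S.proj2 C)) (Sum.inl S.v1) = 1 := by
    rcases hC.2.1 (Sum.inl S.v1) with h | h <;> rw [h] at hsplit <;> omega
  exact ⟨ha, hbc.1, hbc.2, hd⟩

lemma deg_proj1 {C : Set S.Gr.E} (a : S.G1.V) :
    S.G1.degOn (S.proj1 C) a = S.Gr.degOn (S.m1 (S.proj1 C)) (Sum.inl a) := by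
  rw [deg_m1_inl]
  congr 1
  ext e
  exact ⟨fun h => ⟨h, fun hh => (e1_not_mem_proj1 S) (hh ▸ h)⟩, fun h => h.1⟩

lemma deg_proj2_inr {C : Set S.Gr.E} (w : S.G2.V) (hw : w ≠ S.v2) :
    S.G2.degOn (S.proj2 C) w = S.Gr.degOn (S.m2 (S.proj2 C)) (Sum.inr ⟨w, hw⟩) := by
  rw [deg_m2_inr]
  congr 1
  ext e
  exact ⟨fun h => ⟨h, fun hh => (e2_not_mem_proj2 S) (hh ▸ h)⟩, fun h => h.1⟩

lemma deg_proj2_v2 {C : Set S.Gr.E} :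
    S.G2.degOn (S.proj2 C) S.v2 = S.Gr.degOn (S.m2 (S.proj2 C)) (Sum.inl S.v1) := by
  rw [deg_m2_inl_v1]
  congr 1
  ext e
  exact ⟨fun h => ⟨h, fun hh => (e2_not_mem_proj2 S) (hh ▸ h)⟩, fun h => h.1⟩

lemma cycle_proj1 {C : Set S.Gr.E} (hC : S.Gr.IsCycle C) (heps : S.eps ∉ C)
    (hpure : S.proj2 C = ∅) (hne : (S.proj1 C).Nonempty) : S.G1.IsCycle (S.proj1 C) := by
  have hepsz := fun X => S.degOn_eps_part_empty heps X
  refine ⟨hne, ?_, ?_⟩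
  · intro a
    rw [deg_proj1]
    have h := S.degOn_parts C (Sum.inl a)
    rw [hepsz, hpure] at h
    rw [show S.Gr.degOn (S.m2 ∅) (Sum.inl a) = 0 by
      rw [m2_empty]; exact degOn_empty _] at h
    have h2 : S.Gr.degOn (S.m1 (S.proj1 C)) (Sum.inl a) = S.Gr.degOn C (Sum.inl a) := by omega
    rw [h2]
    exact hC.2.1 (Sum.inl a)
  · intro e he f hf a b ha hb
    obtain ⟨hne1, hmem1⟩ := he
    obtain ⟨hne2, hmem2⟩ := hf
    have hr := hC.2.2 _ hmem1 _ hmem2 (Sum.inl a) (Sum.inl b)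
      (by rw [ends_inl, mem_map_inl]; exact ha) (by rw [ends_inl, mem_map_inl]; exact hb)
    have := proj1_reach S (T1 := S.proj1 C) (fun g hg => ⟨g.2, hg⟩)
      (fun h => absurd h heps) hr
    rwa [pi1_inl, pi1_inl] at this

lemma cycle_proj2 {C : Set S.Gr.E} (hC : S.Gr.IsCycle C) (heps : S.eps ∉ C)
    (hpure : S.proj1 C = ∅) (hne : (S.proj2 C).Nonempty) : S.G2.IsCycle (S.proj2 C) := by
  have hepsz := fun X => S.degOn_eps_part_empty heps X
  refine ⟨hne, ?_, ?_⟩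
  · intro w
    by_cases hw : w = S.v2
    · subst hw
      rw [deg_proj2_v2]
      have h := S.degOn_parts C (Sum.inl S.v1)
      rw [hepsz, hpure] at h
      rw [show S.Gr.degOn (S.m1 ∅) (Sum.inl S.v1) = 0 by
        rw [m1_empty]; exact degOn_empty _] at h
      have h2 : S.Gr.degOn (S.m2 (S.proj2 C)) (Sum.inl S.v1)
          = S.Gr.degOn C (Sum.inl S.v1) := by omega
      rw [h2]
      exact hC.2.1 (Sum.inl S.v1)
    · rw [deg_proj2_inr S w hw]
      have h := S.degOn_parts C (Sum.inr ⟨w, hw⟩)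
      rw [hepsz, hpure] at h
      rw [show S.Gr.degOn (S.m1 ∅) (Sum.inr ⟨w, hw⟩) = 0 by
        rw [m1_empty]; exact degOn_empty _] at h
      have h2 : S.Gr.degOn (S.m2 (S.proj2 C)) (Sum.inr ⟨w, hw⟩)
          = S.Gr.degOn C (Sum.inr ⟨w, hw⟩) := by omega
      rw [h2]
      exact hC.2.1 (Sum.inr ⟨w, hw⟩)
  · intro e he f hf a b ha hb
    obtain ⟨hne1, hmem1⟩ := he
    obtain ⟨hne2, hmem2⟩ := hf
    have hr := hC.2.2 _ hmem1 _ hmem2 (S.ι2 a) (S.ι2 b)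
      (by rw [ends_inr]; exact Sym2.mem_map.mpr ⟨a, ha, rfl⟩)
      (by rw [ends_inr]; exact Sym2.mem_map.mpr ⟨b, hb, rfl⟩)
    have := proj2_reach S (T2 := S.proj2 C) (fun g hg => ⟨g.2, hg⟩)
      (fun h => absurd h heps) hr
    rwa [pi2_ι2, pi2_ι2] at this

lemma cycle_split1 {C : Set S.Gr.E} (hC : S.Gr.IsCycle C) (heps : S.eps ∈ C) :
    S.G1.IsCycle (S.split1 C) := by
  obtain ⟨hdg_a, hdg_b, hdg_c, hdg_d⟩ := eps_degs S hC heps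
  have hepst := fun X => S.degOn_eps_part heps X
  refine ⟨⟨S.e1, Set.mem_insert _ _⟩, ?_, ?_⟩
  · intro a
    rw [split1, degOn_insert (e1_not_mem_proj1 S), deg_proj1]
    by_cases hau : a = S.u1
    · subst hau
      rw [hdg_a, if_pos (by rw [S.h1]; exact Sym2.mem_mk_left _ _)]
      right; rfl
    · by_cases hav : a = S.v1
      · subst hav
        rw [hdg_b, if_pos (by rw [S.h1]; exact Sym2.mem_mk_right _ _)]
        right; rfl
      · rw [if_neg (by
          rw [S.h1, Sym2.mem_iff]
          rintro (rfl | rfl)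
          exacts [hau rfl, hav rfl])]
        have h := S.degOn_parts C (Sum.inl a)
        rw [hepst, if_neg (fun hh => hau ((mem_ends_eps_inl S).mp hh)),
          S.deg_m2_inl _ hav] at h
        have h2 : S.Gr.degOn (S.m1 (S.proj1 C)) (Sum.inl a)
            = S.Gr.degOn C (Sum.inl a) := by omega
        rw [h2]
        rcases hC.2.1 (Sum.inl a) with hh | hh <;> simp [hh]
  · -- connectivity
    have hend : ∀ e ∈ S.split1 C, ∀ a ∈ S.G1.ends e,
        ∃ X, S.pi1 X = a ∧ ∃ x ∈ C, X ∈ S.Gr.ends x := by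
      intro e he a ha
      rcases Set.mem_insert_iff.mp he with rfl | ⟨hne, hmem⟩
      · rw [S.h1, Sym2.mem_iff] at ha
        rcases ha with rfl | rfl
        · exact ⟨Sum.inl S.u1, rfl, S.eps, heps, by rw [ends_eps]; exact Sym2.mem_mk_left _ _⟩
        · exact ⟨S.ι2 S.u2, pi1_ι2 S _, S.eps, heps, by rw [ends_eps]; exact Sym2.mem_mk_right _ _⟩
      · exact ⟨Sum.inl a, rfl, Sum.inl ⟨e, hne⟩, hmem, by rw [ends_inl, mem_map_inl]; exact ha⟩
    intro e he f hf a b ha hb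
    obtain ⟨X, hXa, x, hx, hXx⟩ := hend e he a ha
    obtain ⟨Y, hYb, y, hy, hYy⟩ := hend f hf b hb
    have hr := hC.2.2 x hx y hy X Y hXx hYy
    have := proj1_reach S (T1 := S.split1 C)
      (fun g hg => Set.mem_insert_of_mem _ ⟨g.2, hg⟩)
      (fun _ => Set.mem_insert _ _) hr
    rwa [hXa, hYb] at this

lemma cycle_split2 {C : Set S.Gr.E} (hC : S.Gr.IsCycle C) (heps : S.eps ∈ C) :
    S.G2.IsCycle (S.split2 C) := by
  obtain ⟨hdg_a, hdg_b, hdg_c, hdg_d⟩ := eps_degs S hC heps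
  have hepst := fun X => S.degOn_eps_part heps X
  refine ⟨⟨S.e2, Set.mem_insert _ _⟩, ?_, ?_⟩
  · intro w
    rw [split2, degOn_insert (e2_not_mem_proj2 S)]
    by_cases hwu : w = S.u2
    · subst hwu
      rw [deg_proj2_inr S _ S.hu2v2, hdg_d, if_pos (by rw [S.h2]; exact Sym2.mem_mk_left _ _)]
      right; rfl
    · by_cases hwv : w = S.v2
      · subst hwv
        rw [deg_proj2_v2, hdg_c, if_pos (by rw [S.h2]; exact Sym2.mem_mk_right _ _)]
        right; rfl
      · rw [if_neg (by
          rw [S.h2, Sym2.mem_iff]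
          rintro (rfl | rfl)
          exacts [hwu rfl, hwv rfl])]
        rw [deg_proj2_inr S w hwv]
        have h := S.degOn_parts C (Sum.inr ⟨w, hwv⟩)
        rw [hepst, if_neg (fun hh => hwu ((mem_ends_eps_inr S).mp hh)),
          S.deg_m1_inr] at h
        have h2 : S.Gr.degOn (S.m2 (S.proj2 C)) (Sum.inr ⟨w, hwv⟩)
            = S.Gr.degOn C (Sum.inr ⟨w, hwv⟩) := by omega
        rw [h2]
        rcases hC.2.1 (Sum.inr ⟨w, hwv⟩) with hh | hh <;> simp [hh]
  · have hend : ∀ e ∈ S.split2 C, ∀ a ∈ S.G2.ends e,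
        ∃ X, S.pi2 X = a ∧ ∃ x ∈ C, X ∈ S.Gr.ends x := by
      intro e he a ha
      rcases Set.mem_insert_iff.mp he with rfl | ⟨hne, hmem⟩
      · rw [S.h2, Sym2.mem_iff] at ha
        rcases ha with rfl | rfl
        · exact ⟨S.ι2 S.u2, pi2_ι2 S _, S.eps, heps, by
            rw [ends_eps]; exact Sym2.mem_mk_right _ _⟩
        · exact ⟨Sum.inl S.u1, rfl, S.eps, heps, by rw [ends_eps]; exact Sym2.mem_mk_left _ _⟩
      · exact ⟨S.ι2 a, pi2_ι2 S _, Sum.inr (Sum.inl ⟨e, hne⟩), hmem,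
          by rw [ends_inr]; exact Sym2.mem_map.mpr ⟨a, ha, rfl⟩⟩
    intro e he f hf a b ha hb
    obtain ⟨X, hXa, x, hx, hXx⟩ := hend e he a ha
    obtain ⟨Y, hYb, y, hy, hYy⟩ := hend f hf b hb
    have hr := hC.2.2 x hx y hy X Y hXx hYy
    have := proj2_reach S (T2 := S.split2 C)
      (fun g hg => Set.mem_insert_of_mem _ ⟨g.2, hg⟩)
      (fun _ => Set.mem_insert _ _) hr
    rwa [hXa, hYb] at this

end VSetup


namespace VSetup

open MGraph

variable (S : VSetup)

lemma pure1_eq {C : Set S.Gr.E} (heps : S.eps ∉ C) (hpure : S.proj2 C = ∅) :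
    C = S.m1 (S.proj1 C) := by
  have h := set_decomp S C
  rw [hpure, m2_empty] at h
  rw [show C ∩ {S.eps} = ∅ by
    ext x
    simp only [Set.mem_inter_iff, Set.mem_singleton_iff, Set.mem_empty_iff_false, iff_false]
    rintro ⟨hx, rfl⟩
    exact heps hx] at h
  simpa using h

lemma pure2_eq {C : Set S.Gr.E} (heps : S.eps ∉ C) (hpure : S.proj1 C = ∅) :
    C = S.m2 (S.proj2 C) := by
  have h := set_decomp S C
  rw [hpure, m1_empty] at h
  rw [show C ∩ {S.eps} = ∅ by
    ext x
    simp only [Set.mem_inter_iff, Set.mem_singleton_iff, Set.mem_empty_iff_false, iff_false]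
    rintro ⟨hx, rfl⟩
    exact heps hx] at h
  simpa using h

lemma decomp_forward {D1 : Set (Set S.G1.E)} {D2 : Set (Set S.G2.E)}
    (hD1 : S.G1.IsCycleDecomp D1) (hD2 : S.G2.IsCycleDecomp D2) :
    ∃ D, S.Gr.IsCycleDecomp D ∧ D.ncard + 1 = D1.ncard + D2.ncard := by
  obtain ⟨C1, ⟨hC1D, hC1e⟩, huniq1⟩ := hD1.2 S.e1 trivial
  obtain ⟨C2, ⟨hC2D, hC2e⟩, huniq2⟩ := hD2.2 S.e2 trivial
  have hC1cyc := (hD1.1 C1 hC1D).1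
  have hC2cyc := (hD2.1 C2 hC2D).1
  have hnoe1 : ∀ C ∈ D1, C ≠ C1 → S.e1 ∉ C :=
    fun C hC hne he => hne (huniq1 C ⟨hC, he⟩)
  have hnoe2 : ∀ C ∈ D2, C ≠ C2 → S.e2 ∉ C :=
    fun C hC hne he => hne (huniq2 C ⟨hC, he⟩)
  refine ⟨insert (S.merge C1 C2) ((S.m1 '' (D1 \ {C1})) ∪ (S.m2 '' (D2 \ {C2}))), ⟨?_, ?_⟩, ?_⟩
  · -- all cycles
    intro X hX
    rcases Set.mem_insert_iff.mp hX with rfl | hX'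
    · exact ⟨cycle_merge S hC1cyc hC1e hC2cyc hC2e, Set.subset_univ _⟩
    · rcases hX' with ⟨C, hC, rfl⟩ | ⟨C, hC, rfl⟩
      · exact ⟨cycle_m1 S (hD1.1 C hC.1).1 (hnoe1 C hC.1 hC.2), Set.subset_univ _⟩
      · exact ⟨cycle_m2 S (hD2.1 C hC.1).1 (hnoe2 C hC.1 hC.2), Set.subset_univ _⟩
  · -- coverage
    rintro (f | f | u) -
    · obtain ⟨Cf, ⟨hCfD, hCfe⟩, huniqf⟩ := hD1.2 f.1 trivial
      by_cases hCf : Cf = C1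
      · subst hCf
        refine ⟨S.merge Cf C2, ⟨Set.mem_insert _ _,
          Set.mem_insert_of_mem _ (Or.inl hCfe)⟩, ?_⟩
        rintro Y ⟨hYD, hxY⟩
        rcases Set.mem_insert_iff.mp hYD with rfl | hY'
        · rfl
        · rcases hY' with ⟨C, hC, rfl⟩ | ⟨C, hC, rfl⟩
          · exact absurd (huniqf C ⟨hC.1, hxY⟩) hC.2
          · exact hxY.elim
      · refine ⟨S.m1 Cf, ⟨Set.mem_insert_of_mem _ (Or.inl ⟨Cf, ⟨hCfD, hCf⟩, rfl⟩), hCfe⟩, ?_⟩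
        rintro Y ⟨hYD, hxY⟩
        rcases Set.mem_insert_iff.mp hYD with rfl | hY'
        · rcases Set.mem_insert_iff.mp hxY with heq | hxY'
          · exact absurd heq (by rintro ⟨⟩)
          · rcases hxY' with h | h
            · exact absurd (huniqf C1 ⟨hC1D, h⟩).symm hCf
            · exact h.elim
        · rcases hY' with ⟨C, hC, rfl⟩ | ⟨C, hC, rfl⟩
          · rw [huniqf C ⟨hC.1, hxY⟩]
          · exact hxY.elim
    · obtain ⟨Cf, ⟨hCfD, hCfe⟩, huniqf⟩ := hD2.2 f.1 trivial
      by_cases hCf : Cf = C2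
      · subst hCf
        refine ⟨S.merge C1 Cf, ⟨Set.mem_insert _ _,
          Set.mem_insert_of_mem _ (Or.inr hCfe)⟩, ?_⟩
        rintro Y ⟨hYD, hxY⟩
        rcases Set.mem_insert_iff.mp hYD with rfl | hY'
        · rfl
        · rcases hY' with ⟨C, hC, rfl⟩ | ⟨C, hC, rfl⟩
          · exact hxY.elim
          · exact absurd (huniqf C ⟨hC.1, hxY⟩) hC.2
      · refine ⟨S.m2 Cf, ⟨Set.mem_insert_of_mem _ (Or.inr ⟨Cf, ⟨hCfD, hCf⟩, rfl⟩), hCfe⟩, ?_⟩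
        rintro Y ⟨hYD, hxY⟩
        rcases Set.mem_insert_iff.mp hYD with rfl | hY'
        · rcases Set.mem_insert_iff.mp hxY with heq | hxY'
          · exact absurd heq (by rintro ⟨⟩)
          · rcases hxY' with h | h
            · exact h.elim
            · exact absurd (huniqf C2 ⟨hC2D, h⟩).symm hCf
        · rcases hY' with ⟨C, hC, rfl⟩ | ⟨C, hC, rfl⟩
          · exact hxY.elim
          · rw [huniqf C ⟨hC.1, hxY⟩]
    · cases u
      refine ⟨S.merge C1 C2, ⟨Set.mem_insert _ _, Set.mem_insert _ _⟩, ?_⟩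
      rintro Y ⟨hYD, hxY⟩
      rcases Set.mem_insert_iff.mp hYD with rfl | hY'
      · rfl
      · rcases hY' with ⟨C, hC, rfl⟩ | ⟨C, hC, rfl⟩
        · exact hxY.elim
        · exact hxY.elim
  · -- cardinality
    have hmerge_not : S.merge C1 C2 ∉ (S.m1 '' (D1 \ {C1})) ∪ (S.m2 '' (D2 \ {C2})) := by
      rintro (⟨C, -, heq⟩ | ⟨C, -, heq⟩)
      · have h : S.eps ∈ S.m1 C := heq.symm ▸ Set.mem_insert _ _
        exact h
      · have h : S.eps ∈ S.m2 C := heq.symm ▸ Set.mem_insert _ _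
        exact h
    have hdisj : Disjoint (S.m1 '' (D1 \ {C1})) (S.m2 '' (D2 \ {C2})) := by
      rw [Set.disjoint_left]
      rintro X ⟨C, hC, rfl⟩ ⟨C', hC', heq⟩
      obtain ⟨e0, he0⟩ := (hD1.1 C hC.1).1.1
      have hne : e0 ≠ S.e1 := fun hh => hnoe1 C hC.1 hC.2 (hh ▸ he0)
      have h : (Sum.inl ⟨e0, hne⟩ : S.Gr.E) ∈ S.m2 C' := heq.symm ▸ he0
      exact h
    have hinj1 : Set.InjOn S.m1 (D1 \ {C1}) := by
      intro C hC C' hC' heq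
      have h := congrArg S.proj1 heq
      rw [proj1_m1, proj1_m1, Set.diff_singleton_eq_self (hnoe1 C hC.1 hC.2),
        Set.diff_singleton_eq_self (hnoe1 C' hC'.1 hC'.2)] at h
      exact h
    have hinj2 : Set.InjOn S.m2 (D2 \ {C2}) := by
      intro C hC C' hC' heq
      have h := congrArg S.proj2 heq
      rw [proj2_m2, proj2_m2, Set.diff_singleton_eq_self (hnoe2 C hC.1 hC.2),
        Set.diff_singleton_eq_self (hnoe2 C' hC'.1 hC'.2)] at h
      exact h
    rw [Set.ncard_insert_of_notMem hmerge_not (Set.toFinite _),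
      Set.ncard_union_eq hdisj (Set.toFinite _) (Set.toFinite _),
      Set.ncard_image_of_injOn hinj1, Set.ncard_image_of_injOn hinj2]
    have h1 : (D1 \ {C1}).ncard + 1 = D1.ncard :=
      Set.ncard_diff_singleton_add_one hC1D (Set.toFinite _)
    have h2 : (D2 \ {C2}).ncard + 1 = D2.ncard :=
      Set.ncard_diff_singleton_add_one hC2D (Set.toFinite _)
    omega

lemma decomp_backward {D : Set (Set S.Gr.E)} (hD : S.Gr.IsCycleDecomp D) :
    ∃ D1 D2, S.G1.IsCycleDecomp D1 ∧ S.G2.IsCycleDecomp D2 ∧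
      D.ncard + 1 = D1.ncard + D2.ncard := by
  obtain ⟨Ce, ⟨hCeD, hCee⟩, huniqe⟩ := hD.2 S.eps trivial
  have hCecyc := (hD.1 Ce hCeD).1
  have hnoeps : ∀ C ∈ D, C ≠ Ce → S.eps ∉ C :=
    fun C hC hne he => hne (huniqe C ⟨hC, he⟩)
  set P1 : Set (Set S.Gr.E) := {C | C ∈ D ∧ C ≠ Ce ∧ (S.proj1 C).Nonempty} with hP1def
  set P2 : Set (Set S.Gr.E) := {C | C ∈ D ∧ C ≠ Ce ∧ (S.proj2 C).Nonempty} with hP2def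
  have hpure1 : ∀ C ∈ P1, S.proj2 C = ∅ := by
    rintro C ⟨hCD, hne, hne1⟩
    rcases purity S (hD.1 C hCD).1 (hnoeps C hCD hne) with h | h
    · exact absurd h (Set.nonempty_iff_ne_empty.mp hne1)
    · exact h
  have hpure2 : ∀ C ∈ P2, S.proj1 C = ∅ := by
    rintro C ⟨hCD, hne, hne2⟩
    rcases purity S (hD.1 C hCD).1 (hnoeps C hCD hne) with h | h
    · exact h
    · exact absurd h (Set.nonempty_iff_ne_empty.mp hne2)
  have hdisj : Disjoint P1 P2 := by
    rw [Set.disjoint_left]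
    rintro C hC1 hC2
    exact absurd (hpure1 C hC1) (Set.nonempty_iff_ne_empty.mp hC2.2.2)
  have hcover : D \ {Ce} = P1 ∪ P2 := by
    ext C
    constructor
    · rintro ⟨hCD, hne⟩
      rw [Set.mem_singleton_iff] at hne
      obtain ⟨x, hx⟩ := (hD.1 C hCD).1.1
      rcases x with f | f | u
      · exact Or.inl ⟨hCD, hne, ⟨f.1, f.2, hx⟩⟩
      · exact Or.inr ⟨hCD, hne, ⟨f.1, f.2, hx⟩⟩
      · cases u
        exact absurd (huniqe C ⟨hCD, hx⟩) hne
    · rintro (⟨hCD, hne, -⟩ | ⟨hCD, hne, -⟩) <;> exact ⟨hCD, hne⟩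
  have hsplit1cyc := cycle_split1 S hCecyc hCee
  have hsplit2cyc := cycle_split2 S hCecyc hCee
  refine ⟨insert (S.split1 Ce) (S.proj1 '' P1), insert (S.split2 Ce) (S.proj2 '' P2),
    ⟨?_, ?_⟩, ⟨?_, ?_⟩, ?_⟩
  · intro X hX
    rcases Set.mem_insert_iff.mp hX with rfl | ⟨C, hC, rfl⟩
    · exact ⟨hsplit1cyc, Set.subset_univ _⟩
    · exact ⟨cycle_proj1 S (hD.1 C hC.1).1 (hnoeps C hC.1 hC.2.1) (hpure1 C hC) hC.2.2,
        Set.subset_univ _⟩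
  · rintro e -
    by_cases he1 : e = S.e1
    · subst he1
      refine ⟨S.split1 Ce, ⟨Set.mem_insert _ _, Set.mem_insert _ _⟩, ?_⟩
      rintro Y ⟨hYD, hxY⟩
      rcases Set.mem_insert_iff.mp hYD with rfl | ⟨C, hC, rfl⟩
      · rfl
      · exact absurd hxY (e1_not_mem_proj1 S)
    · obtain ⟨Cx, ⟨hCxD, hCxe⟩, huniqx⟩ := hD.2 (Sum.inl ⟨e, he1⟩) trivial
      by_cases hCx : Cx = Ce
      · subst hCx
        refine ⟨S.split1 Cx, ⟨Set.mem_insert _ _, Set.mem_insert_of_mem _ ⟨he1, hCxe⟩⟩, ?_⟩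
        rintro Y ⟨hYD, hxY⟩
        rcases Set.mem_insert_iff.mp hYD with rfl | ⟨C, hC, rfl⟩
        · rfl
        · obtain ⟨hne, hmem⟩ := hxY
          exact absurd (huniqx C ⟨hC.1, hmem⟩) hC.2.1
      · have hCxP1 : Cx ∈ P1 := ⟨hCxD, hCx, ⟨e, he1, hCxe⟩⟩
        refine ⟨S.proj1 Cx, ⟨Set.mem_insert_of_mem _ ⟨Cx, hCxP1, rfl⟩, ⟨he1, hCxe⟩⟩, ?_⟩
        rintro Y ⟨hYD, hxY⟩
        rcases Set.mem_insert_iff.mp hYD with rfl | ⟨C, hC, rfl⟩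
        · rcases Set.mem_insert_iff.mp hxY with heq | ⟨hne, hmem⟩
          · exact absurd heq he1
          · exact absurd (huniqx Ce ⟨hCeD, hmem⟩).symm hCx
        · obtain ⟨hne, hmem⟩ := hxY
          rw [huniqx C ⟨hC.1, hmem⟩]
  · intro X hX
    rcases Set.mem_insert_iff.mp hX with rfl | ⟨C, hC, rfl⟩
    · exact ⟨hsplit2cyc, Set.subset_univ _⟩
    · exact ⟨cycle_proj2 S (hD.1 C hC.1).1 (hnoeps C hC.1 hC.2.1) (hpure2 C hC) hC.2.2,
        Set.subset_univ _⟩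
  · rintro e -
    by_cases he2 : e = S.e2
    · subst he2
      refine ⟨S.split2 Ce, ⟨Set.mem_insert _ _, Set.mem_insert _ _⟩, ?_⟩
      rintro Y ⟨hYD, hxY⟩
      rcases Set.mem_insert_iff.mp hYD with rfl | ⟨C, hC, rfl⟩
      · rfl
      · exact absurd hxY (e2_not_mem_proj2 S)
    · obtain ⟨Cx, ⟨hCxD, hCxe⟩, huniqx⟩ := hD.2 (Sum.inr (Sum.inl ⟨e, he2⟩)) trivial
      by_cases hCx : Cx = Ce
      · subst hCx
        refine ⟨S.split2 Cx, ⟨Set.mem_insert _ _, Set.mem_insert_of_mem _ ⟨he2, hCxe⟩⟩, ?_⟩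
        rintro Y ⟨hYD, hxY⟩
        rcases Set.mem_insert_iff.mp hYD with rfl | ⟨C, hC, rfl⟩
        · rfl
        · obtain ⟨hne, hmem⟩ := hxY
          exact absurd (huniqx C ⟨hC.1, hmem⟩) hC.2.1
      · have hCxP2 : Cx ∈ P2 := ⟨hCxD, hCx, ⟨e, he2, hCxe⟩⟩
        refine ⟨S.proj2 Cx, ⟨Set.mem_insert_of_mem _ ⟨Cx, hCxP2, rfl⟩, ⟨he2, hCxe⟩⟩, ?_⟩
        rintro Y ⟨hYD, hxY⟩
        rcases Set.mem_insert_iff.mp hYD with rfl | ⟨C, hC, rfl⟩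
        · rcases Set.mem_insert_iff.mp hxY with heq | ⟨hne, hmem⟩
          · exact absurd heq he2
          · exact absurd (huniqx Ce ⟨hCeD, hmem⟩).symm hCx
        · obtain ⟨hne, hmem⟩ := hxY
          rw [huniqx C ⟨hC.1, hmem⟩]
  · -- cardinality
    have hs1 : S.split1 Ce ∉ S.proj1 '' P1 := by
      rintro ⟨C, -, heq⟩
      have h : S.e1 ∈ S.proj1 C := heq.symm ▸ Set.mem_insert _ _
      exact e1_not_mem_proj1 S h
    have hs2 : S.split2 Ce ∉ S.proj2 '' P2 := by
      rintro ⟨C, -, heq⟩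
      have h : S.e2 ∈ S.proj2 C := heq.symm ▸ Set.mem_insert _ _
      exact e2_not_mem_proj2 S h
    have hinj1 : Set.InjOn S.proj1 P1 := by
      intro C hC C' hC' heq
      rw [pure1_eq S (hnoeps C hC.1 hC.2.1) (hpure1 C hC),
        pure1_eq S (hnoeps C' hC'.1 hC'.2.1) (hpure1 C' hC'), heq]
    have hinj2 : Set.InjOn S.proj2 P2 := by
      intro C hC C' hC' heq
      rw [pure2_eq S (hnoeps C hC.1 hC.2.1) (hpure2 C hC),
        pure2_eq S (hnoeps C' hC'.1 hC'.2.1) (hpure2 C' hC'), heq]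
    rw [Set.ncard_insert_of_notMem hs1 (Set.toFinite _),
      Set.ncard_insert_of_notMem hs2 (Set.toFinite _),
      Set.ncard_image_of_injOn hinj1, Set.ncard_image_of_injOn hinj2]
    have hd : (D \ {Ce}).ncard + 1 = D.ncard :=
      Set.ncard_diff_singleton_add_one hCeD (Set.toFinite _)
    have hu : (D \ {Ce}).ncard = P1.ncard + P2.ncard := by
      rw [hcover]
      exact Set.ncard_union_eq hdisj (Set.toFinite _) (Set.toFinite _)
    omega

end VSetup


namespace VSetup

open MGraph

lemma main (S : VSetup) (hE1 : S.G1.IsEulerian) (hE2 : S.G2.IsEulerian) :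
    ((S.Gr.c : ℤ) = (S.G1.c : ℤ) + S.G2.c - 1) ∧
    ((S.Gr.nu : ℤ) = (S.G1.nu : ℤ) + S.G2.nu - 1) := by
  obtain ⟨D1e, hD1e⟩ := hE1.decomp
  obtain ⟨D2e, hD2e⟩ := hE2.decomp
  set T1 := {n | ∃ D, S.G1.IsCycleDecompOn Set.univ D ∧ D.ncard = n} with hT1def
  set T2 := {n | ∃ D, S.G2.IsCycleDecompOn Set.univ D ∧ D.ncard = n} with hT2def
  set T := {n | ∃ D, S.Gr.IsCycleDecompOn Set.univ D ∧ D.ncard = n} with hTdef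
  have hT1ne : T1.Nonempty := ⟨D1e.ncard, D1e, hD1e, rfl⟩
  have hT2ne : T2.Nonempty := ⟨D2e.ncard, D2e, hD2e, rfl⟩
  have hpos1 : ∀ n ∈ T1, 1 ≤ n := by
    rintro n ⟨D, hD, rfl⟩
    obtain ⟨C, ⟨hC, -⟩, -⟩ := hD.2 S.e1 trivial
    exact (Set.ncard_pos (Set.toFinite _)).mpr ⟨C, hC⟩
  have hpos2 : ∀ n ∈ T2, 1 ≤ n := by
    rintro n ⟨D, hD, rfl⟩
    obtain ⟨C, ⟨hC, -⟩, -⟩ := hD.2 S.e2 trivial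
    exact (Set.ncard_pos (Set.toFinite _)).mpr ⟨C, hC⟩
  have hbdd1 : BddAbove T1 := ⟨Nat.card (Set S.G1.E), by
    rintro n ⟨D, -, rfl⟩
    rw [← Set.ncard_univ]
    exact Set.ncard_le_ncard (Set.subset_univ D) (Set.toFinite _)⟩
  have hbdd2 : BddAbove T2 := ⟨Nat.card (Set S.G2.E), by
    rintro n ⟨D, -, rfl⟩
    rw [← Set.ncard_univ]
    exact Set.ncard_le_ncard (Set.subset_univ D) (Set.toFinite _)⟩
  have hbddT : BddAbove T := ⟨Nat.card (Set S.Gr.E), by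
    rintro n ⟨D, -, rfl⟩
    rw [← Set.ncard_univ]
    exact Set.ncard_le_ncard (Set.subset_univ D) (Set.toFinite _)⟩
  have hfwd : ∀ a ∈ T1, ∀ b ∈ T2, a + b - 1 ∈ T := by
    rintro a ⟨DA, hDA, rfl⟩ b ⟨DB, hDB, rfl⟩
    obtain ⟨D, hDdec, hcard⟩ := S.decomp_forward hDA hDB
    exact ⟨D, hDdec, by omega⟩
  have hbwd : ∀ n ∈ T, ∃ a ∈ T1, ∃ b ∈ T2, n + 1 = a + b := by
    rintro n ⟨D, hDdec, rfl⟩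
    obtain ⟨D1, D2, h1, h2, hcard⟩ := S.decomp_backward hDdec
    exact ⟨D1.ncard, ⟨D1, h1, rfl⟩, D2.ncard, ⟨D2, h2, rfl⟩, hcard⟩
  have hTne : T.Nonempty := by
    obtain ⟨a, ha⟩ := hT1ne
    obtain ⟨b, hb⟩ := hT2ne
    exact ⟨_, hfwd a ha b hb⟩
  have hc1mem : sInf T1 ∈ T1 := Nat.sInf_mem hT1ne
  have hc2mem : sInf T2 ∈ T2 := Nat.sInf_mem hT2ne
  have hcmain : sInf T = sInf T1 + sInf T2 - 1 := by
    apply le_antisymm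
    · exact Nat.sInf_le (hfwd _ hc1mem _ hc2mem)
    · refine le_csInf hTne ?_
      rintro n hn
      obtain ⟨a, ha, b, hb, hab⟩ := hbwd n hn
      have h1 := Nat.sInf_le ha
      have h2 := Nat.sInf_le hb
      have h3 := hpos1 a ha
      have h4 := hpos2 b hb
      omega
  have hn1mem : sSup T1 ∈ T1 := Nat.sSup_mem hT1ne hbdd1
  have hn2mem : sSup T2 ∈ T2 := Nat.sSup_mem hT2ne hbdd2
  have hnmain : sSup T = sSup T1 + sSup T2 - 1 := by
    apply le_antisymm
    · refine csSup_le hTne ?_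
      rintro n hn
      obtain ⟨a, ha, b, hb, hab⟩ := hbwd n hn
      have h1 := le_csSup hbdd1 ha
      have h2 := le_csSup hbdd2 hb
      have h3 := hpos1 a ha
      omega
    · exact le_csSup hbddT (hfwd _ hn1mem _ hn2mem)
  have hGc : S.Gr.c = sInf T := rfl
  have hG1c : S.G1.c = sInf T1 := rfl
  have hG2c : S.G2.c = sInf T2 := rfl
  have hGn : S.Gr.nu = sSup T := rfl
  have hG1n : S.G1.nu = sSup T1 := rfl
  have hG2n : S.G2.nu = sSup T2 := rfl
  have hp1 := hpos1 _ hc1mem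
  have hp2 := hpos2 _ hc2mem
  have hq1 := hpos1 _ hn1mem
  have hq2 := hpos2 _ hn2mem
  constructor
  · rw [hGc, hG1c, hG2c, hcmain]
    omega
  · rw [hGn, hG1n, hG2n, hnmain]
    omega

end VSetup


/-- cycle numbers under vertex-edge-identification. -/
theorem cycle_numbers_vertexEdgeIdent (G1 G2 : MGraph)
    (hE1 : G1.IsEulerian) (hE2 : G2.IsEulerian)
    (e1 : G1.E) (e2 : G2.E) (u1 v1 : G1.V) (u2 v2 : G2.V)
    (h1 : G1.ends e1 = s(u1, v1)) (h2 : G2.ends e2 = s(u2, v2)) :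
    ((MGraph.vertexEdgeIdent G1 G2 e1 e2 u1 v1 u2 v2 h2).c : ℤ)
        = (G1.c : ℤ) + G2.c - 1 ∧
    ((MGraph.vertexEdgeIdent G1 G2 e1 e2 u1 v1 u2 v2 h2).nu : ℤ)
        = (G1.nu : ℤ) + G2.nu - 1 := by
  exact VSetup.main ⟨G1, G2, e1, e2, u1, v1, u2, v2, h1, h2⟩ hE1 hE2
end

section
/- If G1 is a multigraph containing a cut-edge (bridge) and G2 is any multigraph, then any vertex-edge-identification G1 ⋄ G2 of G1 and G2 also contains a cut-edge. -/
open scoped Classical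

section Aux

open MGraph

private lemma vei_push (G1 G2 : MGraph) (e1 : G1.E) (e2 : G2.E)
    (u1 v1 : G1.V) (u2 v2 : G2.V)
    (h1 : G1.ends e1 = s(u1, v1)) (h2 : G2.ends e2 = s(u2, v2))
    (F : Set (MGraph.vertexEdgeIdent G1 G2 e1 e2 u1 v1 u2 v2 h2).E)
    (F1 : Set G1.E)
    (hF1 : ∀ (f : G1.E) (h : f ≠ e1), Sum.inl ⟨f, h⟩ ∈ F → f ∈ F1)
    (hF2 : (∃ u, Sum.inr (Sum.inr u) ∈ F) → e1 ∈ F1)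
    {x y} (hxy : (MGraph.vertexEdgeIdent G1 G2 e1 e2 u1 v1 u2 v2 h2).ReachOn F x y) :
    G1.ReachOn F1 (Sum.elim id (fun _ => v1) x) (Sum.elim id (fun _ => v1) y) := by
  set π : (MGraph.vertexEdgeIdent G1 G2 e1 e2 u1 v1 u2 v2 h2).V → G1.V :=
    Sum.elim id (fun _ => v1) with hπ
  induction hxy with
  | refl => exact Relation.ReflTransGen.refl
  | @tail b c _ hstep ih =>
    obtain ⟨g, hgF, hg⟩ := hstep
    match g with
    | Sum.inl ⟨f, hf⟩ =>
      obtain ⟨⟨p, q⟩, hpq⟩ := Quot.exists_rep (G1.ends f)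
      have hpq' : G1.ends f = s(p, q) := hpq.symm
      have hg' : s(Sum.inl p, Sum.inl q) = s(b, c) := by
        rw [← Sym2.map_pair_eq Sum.inl p q, ← hpq']; exact hg
      have hg' := Sym2.eq_iff.mp hg'
      refine ih.tail ⟨f, hF1 f hf hgF, ?_⟩
      rcases hg' with ⟨hb, hc⟩ | ⟨hb, hc⟩
      · rw [← hb, ← hc]; exact hpq'
      · rw [← hb, ← hc, Sym2.eq_swap]; exact hpq'
    | Sum.inr (Sum.inl ⟨f, hf⟩) =>
      obtain ⟨⟨p, q⟩, hpq⟩ := Quot.exists_rep (G2.ends f)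
      set φ : G2.V → (MGraph.vertexEdgeIdent G1 G2 e1 e2 u1 v1 u2 v2 h2).V :=
        fun w => if h : w = v2 then Sum.inl v1 else Sum.inr ⟨w, h⟩ with hφ
      have hφv : ∀ w, π (φ w) = v1 := by
        intro w; by_cases h : w = v2 <;> simp [hφ, hπ, h]
      have hg' : s(φ p, φ q) = s(b, c) := by
        have : (G2.ends f).map φ = s(b, c) := hg
        rw [← hpq] at this
        rwa [Sym2.map_pair_eq] at this
      rw [Sym2.eq_iff] at hg'
      have hbc : π b = π c := by
        rcases hg' with ⟨hb, hc⟩ | ⟨hb, hc⟩ <;> rw [← hb, ← hc, hφv, hφv]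
      rw [← hbc]; exact ih
    | Sum.inr (Sum.inr u) =>
      have hg' : s((Sum.inl u1 : (MGraph.vertexEdgeIdent G1 G2 e1 e2 u1 v1 u2 v2 h2).V),
          Sum.inr ⟨u2, fun h => G2.noLoop e2 (by rw [h2, h]; exact Sym2.mk_isDiag_iff.mpr rfl)⟩)
          = s(b, c) := hg
      have hg' := Sym2.eq_iff.mp hg'
      have he1 : e1 ∈ F1 := hF2 ⟨u, hgF⟩
      refine ih.tail ⟨e1, he1, ?_⟩
      rcases hg' with ⟨hb, hc⟩ | ⟨hb, hc⟩
      · rw [← hb, ← hc]; simpa [hπ] using h1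
      · rw [← hb, ← hc]; rw [Sym2.eq_swap]; simpa [hπ] using h1

end Aux

/-- vertex-edge-identification preserves the existence of a cut-edge. -/
theorem vertexEdgeIdent_bridge (G1 G2 : MGraph)
    (e1 : G1.E) (e2 : G2.E) (u1 v1 : G1.V) (u2 v2 : G2.V)
    (h1 : G1.ends e1 = s(u1, v1)) (h2 : G2.ends e2 = s(u2, v2))
    (hbridge : ∃ e, G1.IsBridge e) :
    ∃ e, (MGraph.vertexEdgeIdent G1 G2 e1 e2 u1 v1 u2 v2 h2).IsBridge e := by
  obtain ⟨e, a, b, hends, hnr⟩ := hbridge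
  have symm : ∀ (F : Set G1.E) (x y : G1.V), G1.ReachOn F x y → G1.ReachOn F y x := by
    intro F x y h
    refine Std.Symm.symm (self := @Relation.ReflTransGen.stdSymm _ _ ⟨?_⟩) _ _ h
    rintro p q ⟨f, hfF, hf⟩
    exact ⟨f, hfF, by rw [hf, Sym2.eq_swap]⟩
  by_cases he : e = e1
  · subst he
    refine ⟨Sum.inr (Sum.inr ()), _, _, rfl, ?_⟩
    intro hr
    have key := vei_push G1 G2 e e2 u1 v1 u2 v2 h1 h2
      ({Sum.inr (Sum.inr ())}ᶜ) ({e}ᶜ)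
      (fun f hf _ => hf) ?_ hr
    · have hab : s(a, b) = s(u1, v1) := hends.symm.trans h1
      rw [Sym2.eq_iff] at hab
      simp only [Sum.elim_inl, Sum.elim_inr, id] at key
      rcases hab with ⟨ha, hb⟩ | ⟨ha, hb⟩
      · exact hnr (by rw [ha, hb]; exact key)
      · exact hnr (by rw [ha, hb]; exact symm _ _ _ key)
    · rintro ⟨u, hu⟩
      cases u
      exact absurd rfl hu
  · refine ⟨Sum.inl ⟨e, he⟩, Sum.inl a, Sum.inl b, ?_, ?_⟩
    · show (G1.ends e).map Sum.inl = _
      rw [hends, Sym2.map_pair_eq]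
      rfl
    · intro hr
      have key := vei_push G1 G2 e1 e2 u1 v1 u2 v2 h1 h2
        ({Sum.inl ⟨e, he⟩}ᶜ) ({e}ᶜ) ?_ (fun _ => Ne.symm he) hr
      · simp only [Sum.elim_inl, id] at key
        exact hnr key
      · intro f hf hmem hfe
        apply hmem
        have hfe' : f = e := hfe
        subst hfe'
        rfl
end
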